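/- arXiv:math/0406097 — 16 statements merged into one kernel-verified Lean document; each statement's English description precedes it below -/
import Mathlib

section
/- Let (R, m) be a zero-dimensional Gorenstein local ring, let I ⊆ m be an ideal, and let r be a nonnegative integer with I^r ≠ 0 and I^{r+1} = 0. Then (0 : I^{r-i}) = I^{i+1} holds for every integer i with 0 ≤ i ≤ r-1 if and only if (0 : I^{r-i}) = I^{i+1} holds for every integer i with 0 ≤ i ≤ ⌊(r-1)/2⌋. -/
/-- In a zero-dimensional Gorenstein (self-injective Artinian) local ring, if `x ∉ J`
then there is `u` annihilating `J` with `u * x ≠ 0`. -/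
lemma exists_ann_of_not_mem
    {R : Type*} [CommRing R] [IsArtinianRing R] [IsLocalRing R] [Module.Injective R R]
    (J : Ideal R) {x : R} (hx : x ∉ J) :
    ∃ u : R, (∀ a ∈ J, u * a = 0) ∧ u * x ≠ 0 := by
  classical
  -- the quotient module and the image of x
  set M := R ⧸ J with hM
  have hxbar : (Submodule.Quotient.mk x : M) ≠ 0 :=
    fun h => hx ((Submodule.Quotient.mk_eq_zero J).mp h)
  set xb : M := Submodule.Quotient.mk x with hxb
  have hN : Submodule.span R {xb} ≠ ⊥ := by
    simp [Submodule.span_singleton_eq_bot, hxbar]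
  haveI : IsAtomic (Submodule R M) :=
    isAtomic_of_orderBot_wellFounded_lt (IsWellFounded.wf)
  obtain ⟨S, hS_atom, hSN⟩ :=
    (IsAtomic.eq_bot_or_exists_atom_le (Submodule.span R {xb})).resolve_left hN
  haveI hSsimple : IsSimpleModule R S := isSimpleModule_iff_isAtom.mpr hS_atom
  -- a simple submodule (minimal nonzero ideal) of R itself
  haveI : IsAtomic (Ideal R) :=
    isAtomic_of_orderBot_wellFounded_lt (IsWellFounded.wf)
  have htop : (⊤ : Ideal R) ≠ ⊥ := by
    intro h
    exact one_ne_zero ((Submodule.eq_bot_iff _).mp h 1 Submodule.mem_top)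
  obtain ⟨T, hT_atom, -⟩ :=
    (IsAtomic.eq_bot_or_exists_atom_le (⊤ : Ideal R)).resolve_left htop
  haveI hTsimple : IsSimpleModule R T := isSimpleModule_iff_isAtom.mpr hT_atom
  -- both simple modules are isomorphic to R ⧸ m
  obtain ⟨I₁, hI₁, ⟨e₁⟩⟩ := isSimpleModule_iff_quot_maximal.mp hSsimple
  obtain ⟨I₂, hI₂, ⟨e₂⟩⟩ := isSimpleModule_iff_quot_maximal.mp hTsimple
  have hI12 : I₁ = I₂ := by
    rw [IsLocalRing.eq_maximalIdeal hI₁, IsLocalRing.eq_maximalIdeal hI₂]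
  subst hI12
  -- the nonzero injective map S →ₗ R
  let f : S →ₗ[R] R := T.subtype ∘ₗ (e₂.symm.toLinearMap ∘ₗ e₁.toLinearMap)
  have hf_inj : Function.Injective f := by
    simp only [f, LinearMap.coe_comp]
    exact Subtype.coe_injective.comp (e₂.symm.injective.comp e₁.injective)
  -- extend along S ↪ M using self-injectivity
  obtain ⟨ψ, hψ⟩ := Module.Injective.out S.subtype S.injective_subtype f
  have hmk : ∀ a : R, a • (Submodule.Quotient.mk (1 : R) : M) = Submodule.Quotient.mk a := by
    intro a
    rw [← Submodule.Quotient.mk_smul, smul_eq_mul, mul_one]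
  refine ⟨ψ (Submodule.Quotient.mk 1), ?_, ?_⟩
  · intro a ha
    have h1 : (a : R) • ψ (Submodule.Quotient.mk (1 : R)) =
        ψ (Submodule.Quotient.mk a) := by
      rw [← map_smul, hmk]
    have h2 : (Submodule.Quotient.mk a : M) = 0 := (Submodule.Quotient.mk_eq_zero J).mpr ha
    have h3 : (a : R) • ψ (Submodule.Quotient.mk (1 : R)) = 0 := by
      rw [h1, h2, map_zero]
    rw [mul_comm, ← smul_eq_mul]
    exact h3
  · intro hcontra
    -- then ψ vanishes on the span of xb, hence on S, contradicting injectivity of f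
    have hψx : ψ xb = 0 := by
      have h1 : (x : R) • ψ (Submodule.Quotient.mk (1 : R)) = ψ xb := by
        rw [← map_smul, hxb, hmk]
      rw [← h1, smul_eq_mul, mul_comm]
      exact hcontra
    have hψspan : ∀ m ∈ Submodule.span R {xb}, ψ m = 0 := by
      intro m hm
      obtain ⟨c, rfl⟩ := Submodule.mem_span_singleton.mp hm
      rw [map_smul, hψx, smul_zero]
    have : Nontrivial S := hSsimple.nontrivial
    obtain ⟨s, hs⟩ := exists_ne (0 : S)
    have hfs : f s = 0 := by
      rw [← hψ s]
      exact hψspan _ (hSN s.2)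
    exact hs (hf_inj (by simpa using hfs))

/-- Double annihilator: `(0 : (0 : J)) ≤ J` in a zero-dimensional Gorenstein local ring. -/
lemma colon_colon_le
    {R : Type*} [CommRing R] [IsArtinianRing R] [IsLocalRing R] [Module.Injective R R]
    (J : Ideal R) :
    Submodule.colon (⊥ : Ideal R) (Submodule.colon (⊥ : Ideal R) J) ≤ J := by
  intro x hx
  by_contra hxJ
  obtain ⟨u, hu, hux⟩ := exists_ann_of_not_mem J hxJ
  have huJ : u ∈ Submodule.colon (⊥ : Ideal R) J := by
    rw [Submodule.mem_colon]
    intro p hp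
    simp [smul_eq_mul, hu p hp]
  have := Submodule.mem_colon.mp hx u huJ
  simp [smul_eq_mul] at this
  exact hux (by rw [mul_comm]; exact this)

/-- **Theorem 3.1 (3) ⟺ (4)**: Let `(R, m)` be a zero-dimensional Gorenstein local ring
(i.e. an Artinian local ring that is injective as a module over itself), let `I ⊆ m` be an
ideal, and let `r ≥ 0` with `I ^ r ≠ 0` and `I ^ (r + 1) = 0`.  Then `(0 : I^(r-i)) = I^(i+1)`
for all `0 ≤ i ≤ r - 1` iff `(0 : I^(r-i)) = I^(i+1)` for all `0 ≤ i ≤ ⌊(r-1)/2⌋`. -/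
theorem colon_bot_eq_pow_iff_half_range
    {R : Type*} [CommRing R] [IsArtinianRing R] [IsLocalRing R] [Module.Injective R R]
    (I : Ideal R) (hIm : I ≤ IsLocalRing.maximalIdeal R)
    (r : ℕ) (hr : I ^ r ≠ ⊥) (hr1 : I ^ (r + 1) = ⊥) :
    (∀ i : ℕ, i + 1 ≤ r → Submodule.colon (⊥ : Ideal R) ((I ^ (r - i) : Ideal R) : Set R) = I ^ (i + 1)) ↔
      (∀ i : ℕ, 2 * i + 1 ≤ r → Submodule.colon (⊥ : Ideal R) ((I ^ (r - i) : Ideal R) : Set R) = I ^ (i + 1)) := by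
  constructor
  · intro h i hi
    exact h i (by omega)
  · intro h j hj
    by_cases hcase : 2 * j + 1 ≤ r
    · exact h j hcase
    · -- upper half: use the statement for i = r - 1 - j and the double annihilator
      set i := r - 1 - j with hi_def
      have h2i : 2 * i + 1 ≤ r := by omega
      have hkey := h i h2i
      have hri : r - i = j + 1 := by omega
      have hi1 : i + 1 = r - j := by omega
      rw [hri, hi1] at hkey
      -- hkey : colon ⊥ (I ^ (j+1)) = I ^ (r - j)
      apply le_antisymm
      · calc Submodule.colon (⊥ : Ideal R) ((I ^ (r - j) : Ideal R) : Set R)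
            = Submodule.colon (⊥ : Ideal R) (Submodule.colon (⊥ : Ideal R) ((I ^ (j + 1) : Ideal R) : Set R)) := by
              rw [hkey]
          _ ≤ I ^ (j + 1) := colon_colon_le _
      · intro x hx
        rw [Submodule.mem_colon]
        intro p hp
        have hmem : x * p ∈ I ^ (j + 1) * I ^ (r - j) := Ideal.mul_mem_mul hx hp
        have hpow : I ^ (j + 1) * I ^ (r - j) = I ^ (r + 1) := by
          rw [← pow_add]
          congr 1
          omega
        rw [hpow, hr1] at hmem
        simpa [smul_eq_mul] using hmem
end

section
/- Let (R, m) be a zero-dimensional Gorenstein local ring, let I ⊆ m be an ideal, and let r be a nonnegative integer with I^r ≠ 0 and I^{r+1} = 0. Then (0 : I^{r-i}) = I^{i+1} holds for every integer i with 0 ≤ i ≤ r-1 if and only if both (I^r : I^{r-i}) = I^i for every integer i with 1 ≤ i ≤ r-1 and (0 : I) = I^r. -/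
lemma colon_colon_aux {R : Type*} [CommRing R] (A B C : Ideal R) :
    Submodule.colon (Submodule.colon A B) C = Submodule.colon A (B * C) := by
  ext x
  simp only [Submodule.mem_colon, smul_eq_mul]
  constructor
  · intro h p hp
    refine Submodule.mul_induction_on hp (fun b hb c hc => ?_) (fun y z hy hz => ?_)
    · have := h c hc b hb
      rwa [show x * c * b = x * (b * c) by ring] at this
    · rw [mul_add]; exact A.add_mem hy hz
  · intro h c hc b hb
    have := h (b * c) (Ideal.mul_mem_mul hb hc)
    rwa [show x * (b * c) = x * c * b by ring] at this

/-- **Theorem 3.1 (3) ⟺ (6)**: Let `(R, m)` be a zero-dimensional Gorenstein local ring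
(i.e. an Artinian local ring that is injective as a module over itself), let `I ⊆ m` be an
ideal, and let `r ≥ 0` with `I ^ r ≠ 0` and `I ^ (r + 1) = 0`.  Then `(0 : I^(r-i)) = I^(i+1)`
for all `0 ≤ i ≤ r - 1` iff both `(I^r : I^(r-i)) = I^i` for all `1 ≤ i ≤ r - 1` and
`(0 : I) = I^r`. -/
theorem colon_bot_eq_pow_iff_colon_top_pow
    {R : Type*} [CommRing R] [IsArtinianRing R] [IsLocalRing R] [Module.Injective R R]
    (I : Ideal R) (hIm : I ≤ IsLocalRing.maximalIdeal R)
    (r : ℕ) (hr : I ^ r ≠ ⊥) (hr1 : I ^ (r + 1) = ⊥) :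
    (∀ i : ℕ, i + 1 ≤ r → Submodule.colon (⊥ : Ideal R) ((I ^ (r - i) : Ideal R) : Set R) = I ^ (i + 1)) ↔
      ((∀ i : ℕ, 1 ≤ i → i + 1 ≤ r → Submodule.colon (I ^ r) ((I ^ (r - i) : Ideal R) : Set R) = I ^ i) ∧
        Submodule.colon (⊥ : Ideal R) I = I ^ r) := by
  constructor
  · intro h
    have h2 : Submodule.colon (⊥ : Ideal R) I = I ^ r := by
      rcases Nat.eq_zero_or_pos r with hr0 | hr0
      · subst hr0
        have hI : I = ⊥ := by simpa using hr1
        subst hI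
        ext x
        simp [Submodule.mem_colon, Submodule.mem_annihilator]
      · have := h (r - 1) (by omega)
        rw [show r - (r - 1) = 1 by omega, pow_one] at this
        rw [this, show r - 1 + 1 = r by omega]
    refine ⟨fun i hi1 hi2 => ?_, h2⟩
    rw [← h2, colon_colon_aux, ← pow_succ']
    have := h (i - 1) (by omega)
    rwa [show r - (i - 1) = r - i + 1 by omega, show i - 1 + 1 = i by omega] at this
  · rintro ⟨h1, h2⟩ i hi
    rw [show r - i = r - i - 1 + 1 by omega, pow_succ', ← colon_colon_aux, h2]
    rcases eq_or_lt_of_le hi with heq | hlt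
    · rw [show r - i - 1 = 0 by omega, pow_zero, Ideal.one_eq_top,
        Submodule.top_coe, Submodule.colon_top, heq]
    · have := h1 (i + 1) (by omega) (by omega)
      rwa [show r - (i + 1) = r - i - 1 by omega] at this
end

section
/- Let (R, m) be a zero-dimensional Gorenstein local ring, let I ⊆ m be an ideal, and let r be a nonnegative integer with I^r ≠ 0 and I^{r+1} = 0. Then the following are equivalent: (a) I^i ∩ (I^{i+1} : m) ∩ (I^{i+2} : I) = I^{i+1} for every integer i with 0 ≤ i ≤ r-1 (this says that the graded socle of the associated graded ring of I vanishes in all degrees below r); (b) (0 : I^{r-i}) = I^{i+1} for every integer i with 0 ≤ i ≤ r-1. -/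
namespace SocleVanish

variable {R : Type*} [CommRing R]

lemma ann_mem_iff {J : Ideal R} {x : R} :
    x ∈ Submodule.colon (⊥ : Ideal R) J ↔ ∀ p ∈ J, x * p = 0 := by
  rw [Submodule.mem_colon]
  exact ⟨fun h p hp => by simpa [smul_eq_mul] using h p hp,
         fun h p hp => by simpa [smul_eq_mul] using h p hp⟩

lemma le_ann_iff {A J : Ideal R} :
    A ≤ Submodule.colon (⊥ : Ideal R) J ↔ A * J ≤ ⊥ := by
  rw [Ideal.mul_le]
  constructor
  · intro h a ha j hj
    exact (Ideal.mem_bot).mpr (ann_mem_iff.mp (h ha) j hj)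
  · intro h a ha
    exact ann_mem_iff.mpr fun p hp => (Ideal.mem_bot).mp (h a ha p hp)

lemma ann_antitone {A B : Ideal R} (h : A ≤ B) :
    Submodule.colon (⊥ : Ideal R) B ≤ Submodule.colon (⊥ : Ideal R) A := by
  intro x hx
  exact ann_mem_iff.mpr fun p hp => ann_mem_iff.mp hx p (h hp)

lemma ann_bot : Submodule.colon (⊥ : Ideal R) (⊥ : Ideal R) = ⊤ := by
  refine eq_top_iff.mpr fun x _ => ann_mem_iff.mpr fun p hp => ?_
  rw [Ideal.mem_bot.mp hp, mul_zero]

lemma ann_top : Submodule.colon (⊥ : Ideal R) (⊤ : Ideal R) = ⊥ := by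
  refine le_antisymm (fun x hx => ?_) bot_le
  have := ann_mem_iff.mp hx 1 trivial
  simpa using this

lemma self_le_ann_ann (A : Ideal R) :
    A ≤ Submodule.colon (⊥ : Ideal R) (Submodule.colon (⊥ : Ideal R) A) :=
  fun a ha => ann_mem_iff.mpr fun p hp => by
    have := ann_mem_iff.mp hp a ha
    rwa [mul_comm]

lemma ann_mul (C B : Ideal R) :
    Submodule.colon (⊥ : Ideal R) ((C * B : Ideal R) : Set R) =
      Submodule.colon (Submodule.colon (⊥ : Ideal R) C) B := by
  ext x
  rw [ann_mem_iff, Submodule.mem_colon]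
  constructor
  · intro h b hb
    exact ann_mem_iff.mpr fun c hc => by
      have := h (c * b) (Ideal.mul_mem_mul hc hb)
      rw [smul_eq_mul]; linear_combination this
  · intro h p hp
    refine Submodule.mul_induction_on hp (fun c hc b hb => ?_) (fun u v hu hv => ?_)
    · have := ann_mem_iff.mp (h b hb) c hc
      rw [smul_eq_mul] at this; linear_combination this
    · rw [mul_add, hu, hv, add_zero]

lemma ann_sup (A B : Ideal R) :
    Submodule.colon (⊥ : Ideal R) ((A ⊔ B : Ideal R) : Set R) =
      Submodule.colon (⊥ : Ideal R) A ⊓ Submodule.colon (⊥ : Ideal R) B := by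
  refine le_antisymm (le_inf (ann_antitone le_sup_left) (ann_antitone le_sup_right)) ?_
  intro x hx
  refine ann_mem_iff.mpr fun p hp => ?_
  obtain ⟨a, ha, b, hb, rfl⟩ := Submodule.mem_sup.mp hp
  rw [mul_add, ann_mem_iff.mp hx.1 a ha, ann_mem_iff.mp hx.2 b hb, add_zero]

/-- Nakayama-type lemma for a nilpotent ideal, no finiteness needed. -/
lemma le_of_le_sup_mul_of_nilpotent {J N N' : Ideal R} {k : ℕ} (hk : J ^ k = ⊥)
    (h : N' ≤ N ⊔ J * N') : N' ≤ N := by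
  have H : ∀ n : ℕ, N' ≤ N ⊔ J ^ n * N' := by
    intro n
    induction n with
    | zero => rw [pow_zero, Ideal.one_eq_top, Ideal.top_mul]; exact le_sup_right
    | succ n ih =>
      refine ih.trans (sup_le le_sup_left ?_)
      calc J ^ n * N' ≤ J ^ n * (N ⊔ J * N') := Ideal.mul_mono_right h
        _ = J ^ n * N ⊔ J ^ (n + 1) * N' := by rw [Ideal.mul_sup, ← mul_assoc, ← pow_succ]
        _ ≤ N ⊔ J ^ (n + 1) * N' := sup_le_sup_right Ideal.mul_le_right _
  have h2 := H k
  rwa [hk, Ideal.bot_mul, sup_bot_eq] at h2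

section gorenstein
variable [IsArtinianRing R] [IsLocalRing R]

lemma exists_pow_maximalIdeal_eq_bot :
    ∃ n, (IsLocalRing.maximalIdeal R) ^ n = ⊥ := by
  obtain ⟨n, hn⟩ := IsArtinianRing.isNilpotent_jacobson_bot (R := R)
  rw [IsLocalRing.jacobson_eq_maximalIdeal ⊥ bot_ne_top] at hn
  exact ⟨n, by simpa using hn⟩

lemma exists_ne_zero_mul_eq_zero (J : Ideal R) (hJ : J ≠ ⊤) :
    ∃ z : R, z ≠ 0 ∧ ∀ p ∈ J, z * p = 0 := by
  classical
  have hbot := exists_pow_maximalIdeal_eq_bot (R := R)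
  have hk : (IsLocalRing.maximalIdeal R) ^ (Nat.find hbot) = ⊥ := Nat.find_spec hbot
  have hkpos : Nat.find hbot ≠ 0 := by
    intro h
    have h2 := hk
    rw [h, pow_zero, Ideal.one_eq_top] at h2
    have : (1 : R) ∈ (⊥ : Ideal R) := h2 ▸ trivial
    exact one_ne_zero (Ideal.mem_bot.mp this)
  have hprev : (IsLocalRing.maximalIdeal R) ^ (Nat.find hbot - 1) ≠ ⊥ :=
    Nat.find_min hbot (by omega)
  obtain ⟨z, hz, hz0⟩ := Submodule.ne_bot_iff _ |>.mp hprev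
  refine ⟨z, hz0, fun p hp => ?_⟩
  have hpm : p ∈ IsLocalRing.maximalIdeal R := IsLocalRing.le_maximalIdeal hJ hp
  have hmem : z * p ∈ (IsLocalRing.maximalIdeal R) ^ (Nat.find hbot - 1) *
      IsLocalRing.maximalIdeal R := Ideal.mul_mem_mul hz hpm
  rw [← pow_succ] at hmem
  have hk1 : Nat.find hbot - 1 + 1 = Nat.find hbot := by omega
  rw [hk1, hk] at hmem
  exact Ideal.mem_bot.mp hmem

variable [Module.Injective R R]

/-- Double annihilator: in a zero-dimensional Gorenstein local ring,
`(0 : (0 : A)) = A` for every ideal `A`. -/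
lemma ann_ann (A : Ideal R) :
    Submodule.colon (⊥ : Ideal R) (Submodule.colon (⊥ : Ideal R) A) = A := by
  refine le_antisymm ?_ (self_le_ann_ann A)
  intro x hx
  by_contra hxA
  have hJ : A.colon (Ideal.span {x}) ≠ ⊤ := by
    intro hEq
    apply hxA
    have h1 : (1 : R) ∈ A.colon (Ideal.span {x}) := by rw [hEq]; trivial
    simpa using Ideal.mem_colon_span_singleton.mp h1
  obtain ⟨z, hz0, hz⟩ := exists_ne_zero_mul_eq_zero _ hJ
  let xb : R ⧸ A := Submodule.Quotient.mk x
  let φ : R →ₗ[R] R ⧸ A := LinearMap.toSpanSingleton R _ xb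
  let ψ : R →ₗ[R] R := LinearMap.toSpanSingleton R R z
  have hker : LinearMap.ker φ ≤ LinearMap.ker ψ := by
    intro s hs
    have hs0 : s • xb = 0 := hs
    have hsx : s * x ∈ A := by
      rw [← Submodule.Quotient.mk_smul, Submodule.Quotient.mk_eq_zero, smul_eq_mul] at hs0
      exact hs0
    have hsJ : s ∈ A.colon (Ideal.span {x}) := Ideal.mem_colon_span_singleton.mpr hsx
    show s • z = 0
    rw [smul_eq_mul, mul_comm]
    exact hz s hsJ
  let g : ↥(LinearMap.range φ) →ₗ[R] R :=
    (Submodule.liftQ (LinearMap.ker φ) ψ hker).comp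
      (LinearMap.quotKerEquivRange φ).symm.toLinearMap
  obtain ⟨h, hh⟩ := Module.Injective.out (Submodule.subtype (LinearMap.range φ))
    (Submodule.injective_subtype _) g
  have hxb1 : xb = φ 1 := by simp [φ, xb]
  have hmem : xb ∈ LinearMap.range φ := ⟨1, hxb1.symm⟩
  have hxz : h xb = z := by
    have h1 := hh ⟨xb, hmem⟩
    have h2 : g ⟨xb, hmem⟩ = z := by
      have he : (LinearMap.quotKerEquivRange φ).symm ⟨xb, hmem⟩ =
          Submodule.Quotient.mk 1 := by
        rw [LinearEquiv.symm_apply_eq]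
        refine Subtype.ext ?_
        rw [LinearMap.quotKerEquivRange_apply_mk]
        exact hxb1
      show (Submodule.liftQ (LinearMap.ker φ) ψ hker)
          ((LinearMap.quotKerEquivRange φ).symm ⟨xb, hmem⟩) = z
      rw [he, Submodule.liftQ_apply]
      simp [ψ]
    rw [← h2, ← h1]
    rfl
  set c := h (Submodule.Quotient.mk (1 : R)) with hc
  have hmk : ∀ a : R, (Submodule.Quotient.mk a : R ⧸ A) = a • Submodule.Quotient.mk (1 : R) := by
    intro a
    rw [← Submodule.Quotient.mk_smul, smul_eq_mul, mul_one]
  have hcA : c ∈ Submodule.colon (⊥ : Ideal R) A := by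
    refine ann_mem_iff.mpr fun a haA => ?_
    have h0 : (Submodule.Quotient.mk a : R ⧸ A) = 0 := (Submodule.Quotient.mk_eq_zero _).mpr haA
    have ha0 : a • c = 0 := by rw [hc, ← map_smul, ← hmk, h0, map_zero]
    rw [mul_comm]
    simpa [smul_eq_mul] using ha0
  have hxc : x * c = 0 := ann_mem_iff.mp hx c hcA
  have hxc2 : x • c = z := by
    rw [hc, ← map_smul, ← hmk, hxz]
  rw [smul_eq_mul, hxc] at hxc2
  exact hz0 hxc2.symm

lemma ann_inf (A B : Ideal R) :
    Submodule.colon (⊥ : Ideal R) ((A ⊓ B : Ideal R) : Set R) =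
      Submodule.colon (⊥ : Ideal R) A ⊔ Submodule.colon (⊥ : Ideal R) B := by
  have h : A ⊓ B = Submodule.colon (⊥ : Ideal R)
      ((Submodule.colon (⊥ : Ideal R) A ⊔ Submodule.colon (⊥ : Ideal R) B : Ideal R) : Set R) := by
    rw [ann_sup, ann_ann, ann_ann]
  rw [h, ann_ann]

lemma ann_colon (A B : Ideal R) :
    Submodule.colon (⊥ : Ideal R) (A.colon B) = Submodule.colon (⊥ : Ideal R) A * B := by
  have h : A.colon B = Submodule.colon (⊥ : Ideal R)
      (Submodule.colon (⊥ : Ideal R) A * B) := by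
    rw [ann_mul, ann_ann]
  rw [h, ann_ann]

end gorenstein

end SocleVanish


open SocleVanish in
/-- **Theorem 3.1 (2) ⟺ (3)**: Let `(R, m)` be a zero-dimensional Gorenstein local ring
(i.e. an Artinian local ring that is injective as a module over itself), let `I ⊆ m` be an
ideal, and let `r ≥ 0` with `I ^ r ≠ 0` and `I ^ (r + 1) = 0`.  Then the graded socle of the
associated graded ring of `I` vanishes in all degrees `i < r`, i.e.
`I^i ∩ (I^(i+1) : m) ∩ (I^(i+2) : I) = I^(i+1)` for `0 ≤ i ≤ r - 1`, iff
`(0 : I^(r-i)) = I^(i+1)` for `0 ≤ i ≤ r - 1`. -/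
theorem socle_vanishes_iff_colon_bot_eq_pow
    {R : Type*} [CommRing R] [IsArtinianRing R] [IsLocalRing R] [Module.Injective R R]
    (I : Ideal R) (hIm : I ≤ IsLocalRing.maximalIdeal R)
    (r : ℕ) (hr : I ^ r ≠ ⊥) (hr1 : I ^ (r + 1) = ⊥) :
    (∀ i : ℕ, i + 1 ≤ r →
        I ^ i ⊓ Submodule.colon (I ^ (i + 1)) (IsLocalRing.maximalIdeal R) ⊓
          Submodule.colon (I ^ (i + 2)) I = I ^ (i + 1)) ↔
      (∀ i : ℕ, i + 1 ≤ r → Submodule.colon (⊥ : Ideal R) ((I ^ (r - i) : Ideal R) : Set R) = I ^ (i + 1)) := by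
  set m : Ideal R := IsLocalRing.maximalIdeal R with hm
  have htriv : ∀ i : ℕ, I ^ (i + 1) ≤
      I ^ i ⊓ Submodule.colon (I ^ (i + 1)) m ⊓ Submodule.colon (I ^ (i + 2)) I := by
    intro i
    refine le_inf (le_inf (Ideal.pow_le_pow_right (by omega)) ?_) ?_
    · intro x hx
      rw [Submodule.mem_colon]
      intro p hp
      exact Ideal.mul_mem_right p _ hx
    · intro x hx
      rw [Submodule.mem_colon]
      intro p hp
      have hmm : x * p ∈ I ^ (i + 1) * I := Ideal.mul_mem_mul hx hp
      rwa [← pow_succ] at hmm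
  constructor
  · -- (a) ⇒ (b)
    intro ha
    obtain ⟨k, hk⟩ := exists_pow_maximalIdeal_eq_bot (R := R)
    set K : ℕ → Ideal R := fun j => Submodule.colon (⊥ : Ideal R) ((I ^ j : Ideal R) : Set R) with hK
    have hKmono : ∀ a b : ℕ, a ≤ b → K a ≤ K b := fun a b hab =>
      ann_antitone (Ideal.pow_le_pow_right hab)
    have hK0 : K 0 = ⊥ := by
      simp only [hK, pow_zero, Ideal.one_eq_top]
      exact ann_top
    have hKr1 : K (r + 1) = ⊤ := by
      simp only [hK, hr1]
      exact ann_bot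
    have hmulK : ∀ j : ℕ, I * K (j + 1) ≤ K j := by
      intro j
      simp only [hK]
      rw [le_ann_iff]
      have hEq : I * Submodule.colon (⊥ : Ideal R) ((I ^ (j + 1) : Ideal R) : Set R) * I ^ j =
          Submodule.colon (⊥ : Ideal R) ((I ^ (j + 1) : Ideal R) : Set R) * I ^ (j + 1) := by ring
      rw [hEq]
      exact le_ann_iff.mp le_rfl
    have R1 : ∀ i : ℕ, i + 1 ≤ r → K (i + 1) = K i ⊔ I * K (i + 2) := by
      intro i hi
      have hdual := congrArg (fun J : Ideal R => Submodule.colon (⊥ : Ideal R) J) (ha i hi)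
      rw [ann_inf, ann_inf, ann_colon, ann_colon] at hdual
      -- hdual : (K i ⊔ K (i+1) * m) ⊔ K (i+2) * I = K (i+1)
      refine le_antisymm ?_ (sup_le (hKmono i (i + 1) (by omega)) (hmulK (i + 1)))
      refine le_of_le_sup_mul_of_nilpotent hk ?_
      calc K (i + 1) = (K i ⊔ K (i + 1) * m) ⊔ K (i + 2) * I := hdual.symm
        _ ≤ (K i ⊔ I * K (i + 2)) ⊔ m * K (i + 1) := by
            refine sup_le (sup_le ?_ ?_) ?_
            · exact le_sup_of_le_left le_sup_left
            · rw [mul_comm]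
              exact le_sup_right
            · rw [mul_comm]
              exact le_sup_of_le_left le_sup_right
    have hC : ∀ i : ℕ, i + 1 ≤ r → K (i + 1) = I * K (i + 2) := by
      intro i
      induction i with
      | zero =>
        intro h1
        rw [R1 0 h1, hK0, bot_sup_eq]
      | succ n ih =>
        intro hsucc
        rw [R1 (n + 1) hsucc, ih (by omega)]
        exact sup_eq_right.mpr (Ideal.mul_mono_right (hKmono (n + 2) (n + 1 + 2) (by omega)))
    have main : ∀ i : ℕ, i + 1 ≤ r → K (r - i) = I ^ (i + 1) := by
      intro i
      induction i with
      | zero =>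
        intro hi
        have hc := hC (r - 1) (by omega)
        have e1 : r - 1 + 1 = r := by omega
        have e2 : r - 1 + 2 = r + 1 := by omega
        rw [e1, e2, hKr1, Ideal.mul_top] at hc
        simpa using hc
      | succ n ih =>
        intro hi
        have hc := hC (r - n - 2) (by omega)
        have e1 : r - n - 2 + 1 = r - (n + 1) := by omega
        have e2 : r - n - 2 + 2 = r - n := by omega
        rw [e1, e2] at hc
        rw [hc, ih (by omega), ← pow_succ']
    intro i hi
    have := main i hi
    simpa only [hK] using this
  · -- (b) ⇒ (a)
    intro hb i hir
    refine le_antisymm ?_ (htriv i)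
    intro x hx
    have hx3 : x ∈ Submodule.colon (I ^ (i + 2)) I := hx.2
    have hS : Ideal.span {x} * I ≤ I ^ (i + 2) := by
      rw [Ideal.span_singleton_mul_le_iff]
      intro p hp
      simpa [smul_eq_mul] using Submodule.mem_colon.mp hx3 p hp
    have key : Ideal.span {x} * I ^ (r - i) ≤ ⊥ := by
      have h2 : I ^ (r - i) = I * I ^ (r - i - 1) := by
        rw [← pow_succ']
        congr 1
        omega
      calc Ideal.span {x} * I ^ (r - i) = Ideal.span {x} * I * I ^ (r - i - 1) := by
            rw [h2, ← mul_assoc]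
        _ ≤ I ^ (i + 2) * I ^ (r - i - 1) := Ideal.mul_mono_left hS
        _ = I ^ (r + 1) := by rw [← pow_add]; congr 1; omega
        _ ≤ ⊥ := hr1.le
    have hxx : x ∈ Submodule.colon (⊥ : Ideal R) ((I ^ (r - i) : Ideal R) : Set R) := by
      rw [Submodule.mem_colon]
      intro p hp
      exact key (Ideal.mul_mem_mul (Ideal.mem_span_singleton_self x) hp)
    rwa [hb i hir] at hxx
end

section
/- Let (R, m) be a zero-dimensional Gorenstein local ring, let I ⊆ m be an ideal, and let r be a nonnegative integer with I^r ≠ 0 and I^{r+1} = 0. If (0 : I^{r-i}) = I^{i+1} for every integer i with 0 ≤ i ≤ r-1 (the condition characterizing Gorensteinness of the associated graded ring of I), then I^{i+1} : I^i = I for every integer i with 0 ≤ i ≤ r; in particular each I^i/I^{i+1} is a faithful module over R/I. -/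
/-- **Corollary 3.3**: Let `(R, m)` be a zero-dimensional Gorenstein local ring
(i.e. an Artinian local ring that is injective as a module over itself), let `I ⊆ m` be an
ideal, and let `r ≥ 0` with `I ^ r ≠ 0` and `I ^ (r + 1) = 0`.  If `(0 : I^(r-i)) = I^(i+1)`
for all `0 ≤ i ≤ r - 1` (the condition characterizing Gorensteinness of the associated graded
ring of `I`), then `(I^(i+1) : I^i) = I` for all `0 ≤ i ≤ r`; in particular each
`I^i/I^(i+1)` is a faithful `R/I`-module. -/
theorem colon_pow_succ_pow_eq_self_of_gorenstein_assoc_graded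
    {R : Type*} [CommRing R] [IsArtinianRing R] [IsLocalRing R] [Module.Injective R R]
    (I : Ideal R) (hIm : I ≤ IsLocalRing.maximalIdeal R)
    (r : ℕ) (hr : I ^ r ≠ ⊥) (hr1 : I ^ (r + 1) = ⊥)
    (hG : ∀ i : ℕ, i + 1 ≤ r → Submodule.colon (⊥ : Ideal R) ((I ^ (r - i) : Ideal R) : Set R) = I ^ (i + 1)) :
    ∀ i : ℕ, i ≤ r → Submodule.colon (I ^ (i + 1)) ((I ^ i : Ideal R) : Set R) = I := by
  intro i hi
  rcases Nat.eq_zero_or_pos r with hr0 | hrpos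
  · subst hr0
    interval_cases i
    have hI : I = ⊥ := by simpa using hr1
    subst hI
    apply le_antisymm
    · intro x hx
      have := Submodule.mem_colon.mp hx 1 (by simp)
      simpa using this
    · exact bot_le
  · apply le_antisymm
    · intro x hx
      have hG0 := hG 0 hrpos
      simp only [Nat.sub_zero, Nat.zero_add, pow_one] at hG0
      rw [← hG0, Submodule.mem_colon]
      intro p hp
      have h1 : Ideal.span {x} * I ^ i ≤ I ^ (i + 1) := by
        rw [Ideal.span_singleton_mul_le_iff]
        intro z hz
        exact Submodule.mem_colon.mp hx z hz
      have h2 : Ideal.span {x} * I ^ r ≤ ⊥ := by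
        calc Ideal.span {x} * I ^ r
            = (Ideal.span {x} * I ^ i) * I ^ (r - i) := by
              rw [mul_assoc, ← pow_add]; congr 2; omega
          _ ≤ I ^ (i + 1) * I ^ (r - i) := Ideal.mul_mono h1 le_rfl
          _ = I ^ (r + 1) := by rw [← pow_add]; congr 1; omega
          _ = ⊥ := hr1
      exact h2 (Ideal.mul_mem_mul (Ideal.mem_span_singleton_self x) hp)
    · intro x hx
      rw [Submodule.mem_colon]
      intro p hp
      rw [smul_eq_mul, pow_succ']
      exact Ideal.mul_mem_mul hx hp
end

section
/- Let R be a commutative ring, let x ∈ R be a non-zerodivisor, let J = xR, and let I be an ideal with J ⊆ I. Let r ≥ 1 be an integer with I^{r+1} = JI^r. If J : I^{r-i} = J + I^{i+1} for every integer i with 0 ≤ i ≤ r-1, then J ∩ I^i = JI^{i-1} for every integer i with 1 ≤ i ≤ r (the Valabrega–Valla condition, which in the one-dimensional local Cohen–Macaulay setting implies that the associated graded ring of I is Cohen–Macaulay). -/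
/-- **Lemma 3.6, Valabrega–Valla condition in dimension one**: Let `R` be a commutative
ring, `x` a non-zerodivisor, `J = xR ⊆ I`, and `r ≥ 1` with `I^(r+1) = J I^r`.  If
`(J : I^(r-i)) = J + I^(i+1)` for all `0 ≤ i ≤ r - 1`, then `J ∩ I^i = J I^(i-1)` for all
`1 ≤ i ≤ r`. -/
theorem inf_pow_eq_mul_pow_pred_of_colon_J
    {R : Type*} [CommRing R] (x : R) (hx : x ∈ nonZeroDivisors R)
    (J : Ideal R) (hJ : J = Ideal.span {x}) (I : Ideal R) (hJI : J ≤ I)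
    (r : ℕ) (hr : 1 ≤ r) (hred : I ^ (r + 1) = J * I ^ r)
    (hcol : ∀ i : ℕ, i + 1 ≤ r → Submodule.colon J ((I ^ (r - i) : Ideal R) : Set R) = J ⊔ I ^ (i + 1)) :
    ∀ i : ℕ, 1 ≤ i → i ≤ r → J ⊓ I ^ i = J * I ^ (i - 1) := by
  subst hJ
  -- cancellation of x
  have hcancel : ∀ (N : Ideal R) (c : R), x * c ∈ Ideal.span {x} * N → c ∈ N := by
    intro N c hc
    obtain ⟨z, hz, hxz⟩ := Ideal.mem_span_singleton_mul.mp hc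
    rwa [← (mul_cancel_left_mem_nonZeroDivisors hx).mp hxz]
  -- key claim Q
  have Q : ∀ k, k ≤ r → ∀ b : R, Ideal.span {b} * I ^ (r - k) ≤ I ^ r → b ∈ I ^ k := by
    intro k
    induction k with
    | zero => intro _ b _; simp
    | succ k ih =>
      intro hk b hb
      have hk' : k ≤ r := le_of_lt hk
      have hrk : r - k = (r - (k + 1)) + 1 := by omega
      have h1 : Ideal.span {b} * I ^ (r - k) ≤ Ideal.span {x} * I ^ r := by
        rw [← hred, hrk, pow_succ, ← mul_assoc]
        calc Ideal.span {b} * I ^ (r - (k + 1)) * I ≤ I ^ r * I :=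
              Ideal.mul_mono_left hb
          _ = I ^ (r + 1) := (pow_succ I r).symm
      have hbcol : b ∈ Submodule.colon (Ideal.span {x}) ((I ^ (r - k) : Ideal R) : Set R) := by
        rw [Submodule.mem_colon]
        intro y hy
        exact (Ideal.mul_le_left
          (h1 (Ideal.mul_mem_mul (Ideal.mem_span_singleton_self b) (SetLike.mem_coe.mp hy))) :
            b * y ∈ Ideal.span {x})
      rw [hcol k hk] at hbcol
      obtain ⟨u, hu, d, hd, rfl⟩ := Submodule.mem_sup.mp hbcol
      obtain ⟨c, rfl⟩ := Ideal.mem_span_singleton'.mp hu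
      have hc : Ideal.span {c} * I ^ (r - k) ≤ I ^ r := by
        rw [Ideal.span_singleton_mul_le_iff]
        intro y hy
        apply hcancel
        have hby : (c * x + d) * y ∈ Ideal.span {x} * I ^ r :=
          h1 (Ideal.mul_mem_mul (Ideal.mem_span_singleton_self _) hy)
        have hdy : d * y ∈ Ideal.span {x} * I ^ r := by
          rw [← hred]
          have : d * y ∈ I ^ (k + 1) * I ^ (r - k) := Ideal.mul_mem_mul hd hy
          rwa [← pow_add, show k + 1 + (r - k) = r + 1 by omega] at this
        have : x * (c * y) = (c * x + d) * y - d * y := by ring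
        rw [this]
        exact Submodule.sub_mem _ hby hdy
      have hcI : c ∈ I ^ k := ih hk' c hc
      have : c * x ∈ I ^ (k + 1) := by
        rw [pow_succ]
        exact Ideal.mul_mem_mul hcI (hJI (Ideal.mem_span_singleton_self x))
      exact Ideal.add_mem _ this hd
  intro i hi1 hir
  apply le_antisymm
  · intro a ⟨haJ, haI⟩
    obtain ⟨b, rfl⟩ := Ideal.mem_span_singleton'.mp haJ
    have hb : Ideal.span {b} * I ^ (r - (i - 1)) ≤ I ^ r := by
      rw [Ideal.span_singleton_mul_le_iff]
      intro y hy
      apply hcancel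
      rw [← hred]
      have : (b * x) * y ∈ I ^ i * I ^ (r - (i - 1)) := Ideal.mul_mem_mul haI hy
      rw [← pow_add, show i + (r - (i - 1)) = r + 1 by omega] at this
      rw [show x * (b * y) = b * x * y by ring]
      exact this
    have hbI : b ∈ I ^ (i - 1) := Q (i - 1) (by omega) b hb
    rw [show b * x = x * b by ring]
    exact Ideal.mul_mem_mul (Ideal.mem_span_singleton_self x) hbI
  · refine le_inf Ideal.mul_le_left ?_
    calc Ideal.span {x} * I ^ (i - 1) ≤ I * I ^ (i - 1) := Ideal.mul_mono_left hJI
      _ = I ^ i := by rw [← pow_succ', show i - 1 + 1 = i by omega]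
end

section
/- Let R be a commutative ring and let J ⊆ I be ideals of R such that the quotient ring R/J is an Artinian local ring that is injective as a module over itself (i.e., R/J is a zero-dimensional Gorenstein local ring). Let r ≥ 1 be an integer. Then J : I^{r-i} = J + I^{i+1} holds for every integer i with 0 ≤ i ≤ r-1 if and only if it holds for every integer i with 0 ≤ i ≤ ⌊(r-1)/2⌋. -/
open Submodule

/-- Socle element in a nontrivial Artinian local ring. -/
lemma exists_socle_elem {S : Type*} [CommRing S] [IsArtinianRing S] [IsLocalRing S] :
    ∃ z : S, z ≠ 0 ∧ ∀ a ∈ IsLocalRing.maximalIdeal S, a * z = 0 := by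
  have hnil : IsNilpotent (IsLocalRing.maximalIdeal S) := by
    have := IsArtinianRing.isNilpotent_jacobson_bot (R := S)
    rwa [IsLocalRing.jacobson_eq_maximalIdeal (⊥ : Ideal S) bot_ne_top] at this
  obtain ⟨n, hn⟩ := hnil
  have hP : ∃ n, (IsLocalRing.maximalIdeal S) ^ n = ⊥ := ⟨n, hn⟩
  classical
  set m := Nat.find hP with hm
  have hmspec : (IsLocalRing.maximalIdeal S) ^ m = ⊥ := Nat.find_spec hP
  have hm1 : m ≠ 0 := by
    intro h
    rw [h, pow_zero, Ideal.one_eq_top] at hmspec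
    have : (1 : S) ∈ (⊥ : Ideal S) := hmspec ▸ Submodule.mem_top
    simp at this
  have hlt : (IsLocalRing.maximalIdeal S) ^ (m - 1) ≠ ⊥ :=
    Nat.find_min hP (by omega)
  obtain ⟨z, hz, hz0⟩ := Submodule.exists_mem_ne_zero_of_ne_bot hlt
  refine ⟨z, hz0, fun a ha => ?_⟩
  have : a * z ∈ (IsLocalRing.maximalIdeal S) ^ m := by
    have : (IsLocalRing.maximalIdeal S) ^ m =
        (IsLocalRing.maximalIdeal S) * (IsLocalRing.maximalIdeal S) ^ (m - 1) := by
      rw [← pow_succ']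
      congr 1
      omega
    rw [this]
    exact Ideal.mul_mem_mul ha hz
  rwa [hmspec, Submodule.mem_bot] at this

/-- Double annihilator property in an Artinian local self-injective commutative ring. -/
lemma ann_ann_eq {S : Type*} [CommRing S] [IsArtinianRing S] [IsLocalRing S]
    [Module.Injective S S] (b : Ideal S) :
    Submodule.colon ⊥ ((Submodule.colon ⊥ (b : Set S) : Ideal S) : Set S) = b := by
  apply le_antisymm
  · intro x hx
    by_contra hxb
    -- set up
    set c : Ideal S := Submodule.colon b ((Ideal.span {x} : Ideal S) : Set S) with hc
    have hcx : ∀ s : S, s ∈ c ↔ s * x ∈ b := by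
      intro s
      rw [hc]
      exact Ideal.mem_colon_span_singleton
    have hcne : c ≠ ⊤ := by
      intro h
      have : (1 : S) ∈ c := h ▸ Submodule.mem_top
      rw [hcx, one_mul] at this
      exact hxb this
    have hcm : c ≤ IsLocalRing.maximalIdeal S := IsLocalRing.le_maximalIdeal hcne
    obtain ⟨z, hz0, hzm⟩ := exists_socle_elem (S := S)
    -- the map μ : S → S, s ↦ s * z, kills c
    set μ : S →ₗ[S] S := LinearMap.toSpanSingleton S S z with hμ
    have hkerμ : c ≤ LinearMap.ker μ := by
      intro s hs
      simp only [LinearMap.mem_ker, hμ, LinearMap.toSpanSingleton_apply, smul_eq_mul]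
      exact hzm s (hcm hs)
    set μ' : (S ⧸ c) →ₗ[S] S := Submodule.liftQ c μ hkerμ with hμ'
    -- the ideal K = b + (x)
    set K : Ideal S := b ⊔ Ideal.span {x} with hK
    have hxK : x ∈ K := Submodule.mem_sup_right (Ideal.mem_span_singleton_self x)
    set b' : Submodule S K := Submodule.comap K.subtype b with hb'
    set φ : S →ₗ[S] (K ⧸ b') :=
      (Submodule.mkQ b').comp (LinearMap.toSpanSingleton S K ⟨x, hxK⟩) with hφ
    have hφ_apply : ∀ s : S, φ s = Submodule.Quotient.mk (s • (⟨x, hxK⟩ : K)) := fun s => rfl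
    have hφsurj : Function.Surjective φ := by
      intro q
      obtain ⟨k, rfl⟩ := Submodule.Quotient.mk_surjective _ q
      have hk : (k : S) ∈ b ⊔ Ideal.span {x} := k.2
      rw [Submodule.mem_sup] at hk
      obtain ⟨t, ht, w, hw, hk⟩ := hk
      obtain ⟨s, rfl⟩ := Ideal.mem_span_singleton'.mp hw
      refine ⟨s, ?_⟩
      rw [hφ_apply]
      rw [Submodule.Quotient.eq]
      have : (s • (⟨x, hxK⟩ : K) - k : K) = ⟨s * x - k, sub_mem (Submodule.smul_mem _ _ hxK) k.2⟩ := by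
        ext; simp [smul_eq_mul]
      rw [this]
      simp only [hb', Submodule.mem_comap, Submodule.coe_subtype]
      have : s * x - (k : S) = -t := by rw [← hk]; ring
      rw [this]
      exact neg_mem ht
    have hkerφ : c ≤ LinearMap.ker φ := by
      intro s hs
      rw [LinearMap.mem_ker, hφ_apply, Submodule.Quotient.mk_eq_zero]
      simp only [hb', Submodule.mem_comap, Submodule.coe_subtype]
      simpa [smul_eq_mul] using (hcx s).mp hs
    have hkerφ' : LinearMap.ker φ ≤ c := by
      intro s hs
      rw [LinearMap.mem_ker, hφ_apply, Submodule.Quotient.mk_eq_zero] at hs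
      simp only [hb', Submodule.mem_comap, Submodule.coe_subtype] at hs
      rw [hcx]
      simpa [smul_eq_mul] using hs
    set ψ : (S ⧸ c) →ₗ[S] (K ⧸ b') := Submodule.liftQ c φ hkerφ with hψ
    have hψbij : Function.Bijective ψ := by
      constructor
      · rw [← LinearMap.ker_eq_bot]
        exact Submodule.ker_liftQ_eq_bot _ _ _ hkerφ'
      · intro q
        obtain ⟨s, hs⟩ := hφsurj q
        exact ⟨Submodule.Quotient.mk s, hs⟩
    set e : (S ⧸ c) ≃ₗ[S] (K ⧸ b') := LinearEquiv.ofBijective ψ hψbij with he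
    set g : K →ₗ[S] S := μ'.comp ((e.symm : (K ⧸ b') →ₗ[S] (S ⧸ c)).comp (Submodule.mkQ b')) with hg
    obtain ⟨h, hh⟩ := Module.Injective.out (Submodule.subtype K) (Submodule.injective_subtype K) g
    -- h kills b
    have hb0 : ∀ t ∈ b, h t = 0 := by
      intro t ht
      have htK : t ∈ K := Submodule.mem_sup_left ht
      have := hh ⟨t, htK⟩
      simp only [Submodule.coe_subtype] at this
      rw [this, hg]
      have : (Submodule.mkQ b') ⟨t, htK⟩ = 0 := by
        rw [Submodule.mkQ_apply, Submodule.Quotient.mk_eq_zero]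
        exact ht
      simp [this]
    -- h x = z
    have hhx : h x = z := by
      have := hh ⟨x, hxK⟩
      simp only [Submodule.coe_subtype] at this
      rw [this, hg]
      have heq : e (Submodule.Quotient.mk 1) = (Submodule.mkQ b') ⟨x, hxK⟩ := by
        show ψ (Submodule.Quotient.mk 1) = _
        rw [hψ, Submodule.liftQ_apply, hφ_apply]
        congr 1
        ext
        simp [smul_eq_mul]
      have hsymm : e.symm ((Submodule.mkQ b') ⟨x, hxK⟩) = Submodule.Quotient.mk 1 := by
        rw [← heq, LinearEquiv.symm_apply_apply]
      simp only [LinearMap.comp_apply, LinearEquiv.coe_coe, hsymm]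
      rw [hμ', Submodule.liftQ_apply, hμ, LinearMap.toSpanSingleton_apply, one_smul]
    -- y = h 1 annihilates b
    set y : S := h 1 with hy
    have hyann : y ∈ Submodule.colon ⊥ (b : Set S) := by
      rw [Submodule.mem_colon]
      intro p hp
      have h1 : h p = p • h 1 := by
        conv_lhs => rw [show (p : S) = p • (1 : S) by simp, map_smul]
      have hpy : p * y = h p := by rw [h1, smul_eq_mul, hy]
      rw [Submodule.mem_bot, smul_eq_mul, mul_comm, hpy]
      exact hb0 p hp
    -- contradiction
    have hxy : x * y = 0 := by
      have := Submodule.mem_colon.mp hx y hyann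
      rwa [Submodule.mem_bot, smul_eq_mul] at this
    have : h x = x * y := by
      rw [hy]
      conv_lhs => rw [show (x : S) = x • (1 : S) by simp, map_smul]
      simp [smul_eq_mul]
    rw [hhx, hxy] at this
    exact hz0 this
  · intro p hp
    rw [Submodule.mem_colon]
    intro q hq
    have := Submodule.mem_colon.mp hq p hp
    rwa [Submodule.mem_bot, smul_eq_mul, mul_comm, ← smul_eq_mul] at this

/-- The colon ideal `J : A` is the preimage of the annihilator of the image in `R ⧸ J`. -/
lemma colon_eq_comap_ann {R : Type*} [CommRing R] (J A : Ideal R) :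
    Submodule.colon J (A : Set R) =
      Ideal.comap (Ideal.Quotient.mk J) (Submodule.colon ⊥ ((Ideal.map (Ideal.Quotient.mk J) A : Ideal (R ⧸ J)) : Set (R ⧸ J))) := by
  ext x
  rw [Submodule.mem_colon, Ideal.mem_comap, Submodule.mem_colon]
  constructor
  · intro hx p hp
    obtain ⟨a, ha, rfl⟩ := Ideal.mem_map_iff_of_surjective _ Ideal.Quotient.mk_surjective |>.mp hp
    rw [Submodule.mem_bot, smul_eq_mul, ← map_mul, Ideal.Quotient.eq_zero_iff_mem]
    simpa [smul_eq_mul] using hx a ha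
  · intro hx a ha
    have := hx (Ideal.Quotient.mk J a) (Ideal.mem_map_of_mem _ ha)
    rw [Submodule.mem_bot, smul_eq_mul, ← map_mul, Ideal.Quotient.eq_zero_iff_mem] at this
    simpa [smul_eq_mul] using this

/-- Double-annihilator property for colon ideals over a zero-dimensional Gorenstein quotient. -/
lemma colon_colon_eq {R : Type*} [CommRing R] (J : Ideal R)
    [IsArtinianRing (R ⧸ J)] [IsLocalRing (R ⧸ J)] [Module.Injective (R ⧸ J) (R ⧸ J)]
    (A : Ideal R) (hJA : J ≤ A) :
    Submodule.colon J ((Submodule.colon J (A : Set R) : Ideal R) : Set R) = A := by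
  have h1 := colon_eq_comap_ann J A
  have h2 := colon_eq_comap_ann J (Submodule.colon J A)
  rw [h2, h1, Ideal.map_comap_of_surjective _ Ideal.Quotient.mk_surjective,
    ann_ann_eq, Ideal.comap_map_of_surjective _ Ideal.Quotient.mk_surjective,
    ← RingHom.ker_eq_comap_bot, Ideal.mk_ker, sup_eq_left.mpr hJA]

lemma colon_sup_self {R : Type*} [CommRing R] (J B : Ideal R) :
    Submodule.colon J ((J ⊔ B : Ideal R) : Set R) = Submodule.colon J (B : Set R) := by
  ext x
  rw [Submodule.mem_colon, Submodule.mem_colon]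
  constructor
  · intro hx p hp
    exact hx p (Submodule.mem_sup_right hp)
  · intro hx p hp
    rw [SetLike.mem_coe, Submodule.mem_sup] at hp
    obtain ⟨t, ht, w, hw, rfl⟩ := hp
    rw [smul_add]
    exact add_mem (Ideal.mul_mem_left _ _ ht) (hx w hw)

/-- **Theorem 3.8 (2) ⟺ (3)**: Let `R` be a commutative ring and `J ⊆ I` ideals such that
`R/J` is an Artinian local ring that is injective as a module over itself (a zero-dimensional
Gorenstein local ring).  Let `r ≥ 1`.  Then `(J : I^(r-i)) = J + I^(i+1)` for all
`0 ≤ i ≤ r - 1` iff the same holds for all `0 ≤ i ≤ ⌊(r-1)/2⌋`. -/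
theorem colon_J_eq_sup_iff_half_range
    {R : Type*} [CommRing R] (J I : Ideal R) (hJI : J ≤ I)
    [IsArtinianRing (R ⧸ J)] [IsLocalRing (R ⧸ J)] [Module.Injective (R ⧸ J) (R ⧸ J)]
    (r : ℕ) (hr : 1 ≤ r) :
    (∀ i : ℕ, i + 1 ≤ r → Submodule.colon J ((I ^ (r - i) : Ideal R) : Set R) = J ⊔ I ^ (i + 1)) ↔
      (∀ i : ℕ, 2 * i + 1 ≤ r → Submodule.colon J ((I ^ (r - i) : Ideal R) : Set R) = J ⊔ I ^ (i + 1)) := by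
  constructor
  · intro h i hi
    exact h i (by omega)
  · intro h i hi
    by_cases hcase : 2 * i + 1 ≤ r
    · exact h i hcase
    · push_neg at hcase
      set j := r - 1 - i with hj
      have hj2 : 2 * j + 1 ≤ r := by omega
      have hrj : r - j = i + 1 := by omega
      have hj1 : j + 1 = r - i := by omega
      have hkey := h j hj2
      rw [hrj, hj1] at hkey
      -- hkey : J : I^(i+1) = J ⊔ I^(r-i)
      have e1 : Submodule.colon J ((Submodule.colon J ((I ^ (i + 1) : Ideal R) : Set R) : Ideal R) : Set R) = J ⊔ I ^ (i + 1) := by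
        rw [← colon_sup_self J (I ^ (i + 1))]
        exact colon_colon_eq J _ le_sup_left
      rw [hkey, colon_sup_self] at e1
      exact e1
end

section
/- Let R be a commutative ring and let I, J be ideals of R with J I^r = I^{r+1} for some integer r ≥ 0. Then I^n (J^i : I^r) ⊆ J^{n+i} : I^r for all integers n, i ≥ 0. -/
/-- **Corollary 4.21, first assertion**: Let `R` be a commutative ring and `I, J` ideals with
`J I^r = I^(r+1)` for some `r ≥ 0`.  Then `I^n (J^i : I^r) ⊆ J^(n+i) : I^r` for all
`n, i ≥ 0`. -/
theorem pow_mul_colon_le_colon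
    {R : Type*} [CommRing R] (I J : Ideal R) (r : ℕ) (hred : J * I ^ r = I ^ (r + 1)) :
    ∀ n i : ℕ,
      I ^ n * Submodule.colon (J ^ i) ((I ^ r : Ideal R) : Set R) ≤
        Submodule.colon (J ^ (n + i)) ((I ^ r : Ideal R) : Set R) := by
  have haux : ∀ n : ℕ, J ^ n * I ^ r = I ^ (n + r) := by
    intro n
    induction n with
    | zero => simp
    | succ n ih =>
      calc J ^ (n + 1) * I ^ r = J ^ n * (J * I ^ r) := by ring
        _ = J ^ n * I ^ r * I := by rw [hred]; ring
        _ = I ^ (n + r) * I := by rw [ih]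
        _ = I ^ (n + 1 + r) := by ring
  intro n i
  rw [Ideal.mul_le]
  intro a ha x hx
  rw [Submodule.mem_colon] at hx ⊢
  intro p hp
  -- a * p ∈ I^(n+r) = J^n * I^r
  have hap : a * p ∈ J ^ n * I ^ r := by
    rw [haux, pow_add]
    exact Ideal.mul_mem_mul ha hp
  -- x * (J^n * I^r) ⊆ J^(n+i)
  have hkey : J ^ n * I ^ r * Ideal.span {x} ≤ J ^ (n + i) := by
    rw [mul_assoc, pow_add]
    refine Ideal.mul_mono_right ?_
    rw [Ideal.mul_le]
    intro t ht y hy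
    rw [Ideal.mem_span_singleton] at hy
    obtain ⟨c, rfl⟩ := hy
    have : x * t ∈ J ^ i := by simpa [smul_eq_mul] using hx t ht
    have := Ideal.mul_mem_right c _ this
    convert this using 1
    ring
  have : a * p * x ∈ J ^ (n + i) :=
    hkey (Ideal.mul_mem_mul hap (Ideal.mem_span_singleton_self x))
  simpa [smul_eq_mul, mul_comm, mul_assoc, mul_left_comm] using this
end

section
/- Let R be a Noetherian ring and let J ⊆ I be ideals of R such that I contains a non-zerodivisor and J I^r = I^{r+1} for some integer r ≥ 0. Then there exists an integer i_0 such that J^n (J^i : I^r) = J^{n+i} : I^r for every n ≥ 0 and every i ≥ i_0. -/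
/-- **Corollary 4.21, second assertion**: Let `R` be a Noetherian ring and `J ⊆ I` ideals such
that `I` contains a non-zerodivisor and `J I^r = I^(r+1)` for some `r ≥ 0`.  Then there is an
integer `i₀` with `J^n (J^i : I^r) = J^(n+i) : I^r` for every `n ≥ 0` and every `i ≥ i₀`. -/
theorem exists_pow_mul_colon_eq_colon
    {R : Type*} [CommRing R] [IsNoetherianRing R] (J I : Ideal R) (hJI : J ≤ I)
    (hnzd : ∃ x ∈ I, x ∈ nonZeroDivisors R)
    (r : ℕ) (hred : J * I ^ r = I ^ (r + 1)) :
    ∃ i₀ : ℕ, ∀ n : ℕ, ∀ i : ℕ, i₀ ≤ i →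
      J ^ n * Submodule.colon (J ^ i) ((I ^ r : Ideal R) : Set R) = Submodule.colon (J ^ (n + i)) ((I ^ r : Ideal R) : Set R) := by
  classical
  obtain ⟨x, hxI, hx⟩ := hnzd
  set c : R := x ^ r with hc
  have hcI : c ∈ I ^ r := Ideal.pow_mem_pow hxI r
  have hcnzd : c ∈ nonZeroDivisors R := pow_mem hx r
  -- choose a finite generating set of I^r containing c
  obtain ⟨s, hs⟩ := IsNoetherian.noetherian (I ^ r)
  set t : Finset R := insert c s with ht
  have hts : Submodule.span R (↑t : Set R) = I ^ r := by
    apply le_antisymm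
    · rw [Submodule.span_le]
      intro g hg
      rcases Finset.mem_insert.mp hg with h | h
      · exact h ▸ hcI
      · exact hs ▸ Submodule.subset_span h
    · rw [← hs]
      exact Submodule.span_mono (by intro g hg; exact Finset.mem_insert_of_mem hg)
  have htsub : (↑t : Set R) ⊆ (I ^ r : Ideal R) := by
    rw [← hts]; exact Submodule.subset_span
  -- the embedding φ : R → (t → R), x ↦ (x * g)_g
  set φ : R →ₗ[R] ({ y // y ∈ t } → R) :=
    LinearMap.pi fun j => LinearMap.smulRight (LinearMap.id : R →ₗ[R] R) (j : R) with hφ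
  have hφapp : ∀ (z : R) (j : { y // y ∈ t }), φ z j = z * (j : R) := by
    intro z j; simp [hφ, smul_eq_mul]
  have hinj : Function.Injective φ := by
    rw [← LinearMap.ker_eq_bot]
    rw [eq_bot_iff]
    intro z hz
    have h0 : φ z ⟨c, Finset.mem_insert_self _ _⟩ = 0 := by
      rw [LinearMap.mem_ker.mp hz]; rfl
    rw [hφapp] at h0
    exact (mem_nonZeroDivisors_iff_right.mp hcnzd) z h0
  -- membership of K • ⊤ in the pi module
  have hmem : ∀ (K : Ideal R) (v : { y // y ∈ t } → R),
      v ∈ (K • ⊤ : Submodule R ({ y // y ∈ t } → R)) ↔ ∀ j, v j ∈ K := by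
    intro K v
    constructor
    · intro hv j
      refine Submodule.smul_induction_on hv ?_ ?_
      · intro a ha m _; exact K.mul_mem_right _ ha
      · intro u w hu hw; exact K.add_mem hu hw
    · intro hv
      have : v = ∑ j : { y // y ∈ t }, Pi.single j (v j) := by
        ext j; simp [Finset.sum_apply, Pi.single_apply]
      rw [this]
      refine Submodule.sum_mem _ fun j _ => ?_
      have : Pi.single j (v j) = v j • (Pi.single j 1 : { y // y ∈ t } → R) := by
        ext j'; by_cases h : j' = j <;> simp [Pi.single_apply, h]
      rw [this]
      exact Submodule.smul_mem_smul (hv j) Submodule.mem_top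
  -- colon via generators
  have colon_iff : ∀ (K : Ideal R) (z : R),
      z ∈ Submodule.colon K ((I ^ r : Ideal R) : Set R) ↔ ∀ j : { y // y ∈ t }, z * (j : R) ∈ K := by
    intro K z
    constructor
    · intro h j
      exact Submodule.mem_colon.mp h _ (htsub j.2)
    · intro h
      rw [Submodule.mem_colon]
      intro p hp
      rw [← hts] at hp
      have hle : Submodule.span R (↑t : Set R) ≤
          Submodule.comap (LinearMap.lsmul R R z) K := by
        rw [Submodule.span_le]
        intro g hg
        simpa [smul_eq_mul] using h ⟨g, hg⟩
      simpa [smul_eq_mul] using hle hp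
  set N : Submodule R ({ y // y ∈ t } → R) := LinearMap.range φ with hN
  have himg : ∀ (K : Ideal R),
      (K • ⊤ : Submodule R ({ y // y ∈ t } → R)) ⊓ N =
        Submodule.map φ (Submodule.colon K ((I ^ r : Ideal R) : Set R)) := by
    intro K
    ext v
    rw [Submodule.mem_inf, Submodule.mem_map]
    constructor
    · rintro ⟨hv1, z, rfl⟩
      refine ⟨z, (colon_iff K z).mpr fun j => ?_, rfl⟩
      rw [← hφapp]
      exact (hmem K _).mp hv1 j
    · rintro ⟨z, hz, rfl⟩
      refine ⟨(hmem K _).mpr fun j => ?_, ⟨z, rfl⟩⟩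
      rw [hφapp]
      exact (colon_iff K z).mp hz j
  obtain ⟨k, hk⟩ := Ideal.exists_pow_inf_eq_pow_smul J N
  refine ⟨k, fun n i hi => ?_⟩
  apply le_antisymm
  · rw [Submodule.mul_le]
    intro a ha y hy
    rw [Submodule.mem_colon]
    intro p hp
    have h3 : (a * y) • p = a * (y • p) := by
      simp only [smul_eq_mul]; ring
    rw [h3, pow_add]
    exact Ideal.mul_mem_mul ha (Submodule.mem_colon.mp hy p hp)
  · intro z hz
    replace hz : z ∈ Submodule.colon (J ^ (n + i)) ((I ^ r : Ideal R) : Set R) := hz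
    have h1 : φ z ∈ (J ^ (n + i) • ⊤ : Submodule R ({ y // y ∈ t } → R)) ⊓ N := by
      rw [Submodule.mem_inf]
      exact ⟨(hmem _ _).mpr fun j => by rw [hφapp]; exact (colon_iff _ z).mp hz j, ⟨z, rfl⟩⟩
    have heq : (J ^ (n + i) • ⊤ : Submodule R ({ y // y ∈ t } → R)) ⊓ N =
        J ^ n • ((J ^ i • ⊤ : Submodule R ({ y // y ∈ t } → R)) ⊓ N) := by
      rw [hk (n + i) (le_trans hi (Nat.le_add_left i n)), hk i hi]
      have h2 : n + i - k = n + (i - k) := by omega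
      rw [h2, pow_add, ← Ideal.smul_eq_mul, Submodule.smul_assoc]
    rw [heq, himg, ← Submodule.map_smul''] at h1
    obtain ⟨w, hw, hwz⟩ := h1
    rw [← hinj hwz]
    rwa [Ideal.smul_eq_mul] at hw
end

section
/- Let R be a commutative ring, let x ∈ R be a non-zerodivisor, let J = xR, and let I be an ideal with J ⊆ I. Let r ≥ 1 be an integer with I^{r+1} = JI^r and I^r ≠ JI^{r-1} (so r is the reduction number of I with respect to J). If J^r : I^r = I^{r-u} for some integer u with 0 ≤ u ≤ r, then u = 0; in particular J^r : I^r = I^r. -/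
/-- **Corollary 4.61, first assertion**: Let `R` be a commutative ring, `x` a non-zerodivisor,
`J = xR ⊆ I`, and `r ≥ 1` with `I^(r+1) = J I^r` and `I^r ≠ J I^(r-1)` (so `r` is the
reduction number of `I` with respect to `J`).  If `(J^r : I^r) = I^(r-u)` for some
`0 ≤ u ≤ r`, then `u = 0`; in particular `(J^r : I^r) = I^r`. -/
theorem eq_zero_of_colon_pow_eq_pow_sub
    {R : Type*} [CommRing R] (x : R) (hx : x ∈ nonZeroDivisors R)
    (J : Ideal R) (hJ : J = Ideal.span {x}) (I : Ideal R) (hJI : J ≤ I)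
    (r : ℕ) (hr : 1 ≤ r) (hred : I ^ (r + 1) = J * I ^ r) (hmin : I ^ r ≠ J * I ^ (r - 1))
    (u : ℕ) (hu : u ≤ r) (hcol : Submodule.colon (J ^ r) ((I ^ r : Ideal R) : Set R) = I ^ (r - u)) :
    u = 0 ∧ Submodule.colon (J ^ r) ((I ^ r : Ideal R) : Set R) = I ^ r := by
  -- powers of I beyond r are controlled by J
  have hpow : ∀ k, I ^ (r + k) = J ^ k * I ^ r := by
    intro k
    induction k with
    | zero => simp
    | succ k ih =>
      have e : I ^ (r + (k + 1)) = I ^ (r + k) * I := by rw [← Nat.add_assoc, pow_succ]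
      rw [e, ih, mul_assoc, ← pow_succ, hred, pow_succ]
      ring
  have hJk : ∀ k : ℕ, J ^ k = Ideal.span {x ^ k} := fun k => by
    rw [hJ, Ideal.span_singleton_pow]
  have hxk : ∀ k : ℕ, x ^ k ∈ nonZeroDivisors R := fun k => pow_mem hx k
  have hxmem : ∀ k : ℕ, x ^ k ∈ J ^ k := fun k => by
    rw [hJk k]; exact Ideal.mem_span_singleton_self _
  -- element-wise cancellation of x^k
  have hcancel' : ∀ (k : ℕ) (K : Ideal R) (m : R), x ^ k * m ∈ J ^ k * K → m ∈ K := by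
    intro k K m hm
    rw [hJk k] at hm
    obtain ⟨z, hzK, hz⟩ := Ideal.mem_span_singleton_mul.mp hm
    rwa [← (mul_cancel_left_mem_nonZeroDivisors (hxk k)).mp hz]
  -- ideal-wise cancellation of J^k
  have hcancel : ∀ (k : ℕ) (A B : Ideal R), J ^ k * A ≤ J ^ k * B → A ≤ B := by
    intro k A B h a ha
    exact hcancel' k B a (h (Ideal.mul_mem_mul (hxmem k) ha))
  rcases Nat.eq_zero_or_pos u with h0 | hu1
  · subst h0; exact ⟨rfl, by simpa using hcol⟩
  exfalso
  have hru : r - u + u = r := Nat.sub_add_cancel hu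
  have hIcol : I ^ (r - u) ≤ Submodule.colon (J ^ r) ((I ^ r : Ideal R) : Set R) := le_of_eq hcol.symm
  have hA : I ^ (r - u) * I ^ r ≤ J ^ r := by
    rw [Ideal.mul_le]
    intro a ha b hb
    simpa [smul_eq_mul] using Submodule.mem_colon.mp (hIcol ha) b hb
  -- I^r ≤ J^u
  have hB : J ^ (r - u) * I ^ r ≤ J ^ (r - u) * J ^ u := by
    calc J ^ (r - u) * I ^ r = I ^ (r + (r - u)) := (hpow _).symm
      _ = I ^ (r - u) * I ^ r := by rw [← pow_add, Nat.add_comm]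
      _ ≤ J ^ r := hA
      _ = J ^ (r - u) * J ^ u := by rw [← pow_add, hru]
  have hIJu : I ^ r ≤ J ^ u := hcancel _ _ _ hB
  -- I^r ≤ J^u * I^(r-u)
  have hmain : I ^ r ≤ J ^ u * I ^ (r - u) := by
    intro a ha
    have haJu : a ∈ Ideal.span {x ^ u} := (hJk u) ▸ hIJu ha
    obtain ⟨b, hb⟩ := Ideal.mem_span_singleton'.mp haJu
    have hbcol : b ∈ Submodule.colon (J ^ r) ((I ^ r : Ideal R) : Set R) := by
      rw [Submodule.mem_colon]
      intro c hc
      rw [smul_eq_mul]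
      have h2 : x ^ u * (b * c) ∈ J ^ u * J ^ r := by
        have hac : a * c ∈ I ^ r * I ^ r := Ideal.mul_mem_mul ha hc
        have hle : I ^ r * I ^ r ≤ J ^ u * J ^ r := by
          calc I ^ r * I ^ r = I ^ (r + r) := (pow_add I r r).symm
            _ = J ^ r * I ^ r := hpow r
            _ ≤ J ^ r * J ^ u := Ideal.mul_mono_right hIJu
            _ = J ^ u * J ^ r := mul_comm _ _
        have : a * c = x ^ u * (b * c) := by rw [← hb]; ring
        rw [← this]; exact hle hac
      exact hcancel' u (J ^ r) (b * c) h2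
    have hbI : b ∈ I ^ (r - u) := hcol ▸ hbcol
    have hmem : b * x ^ u ∈ J ^ u * I ^ (r - u) := by
      rw [mul_comm b (x ^ u)]
      exact Ideal.mul_mem_mul (hxmem u) hbI
    rwa [hb] at hmem
  -- contradiction with minimality
  obtain ⟨v, huv⟩ : ∃ v, u = v + 1 := ⟨u - 1, by omega⟩
  have hfinal : I ^ r ≤ J * I ^ (r - 1) := by
    rw [huv] at hmain
    calc I ^ r ≤ J ^ (v + 1) * I ^ (r - (v + 1)) := hmain
      _ = J * (J ^ v * I ^ (r - (v + 1))) := by rw [pow_succ', mul_assoc]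
      _ ≤ J * (I ^ v * I ^ (r - (v + 1))) :=
          Ideal.mul_mono_right (Ideal.mul_mono_left (Ideal.pow_right_mono hJI _))
      _ = J * I ^ (r - 1) := by
          have hexp : v + (r - (v + 1)) = r - 1 := by omega
          rw [← pow_add, hexp]
  have hother : J * I ^ (r - 1) ≤ I ^ r := by
    calc J * I ^ (r - 1) ≤ I * I ^ (r - 1) := Ideal.mul_mono_left hJI
      _ = I ^ r := by
          have hexp : r - 1 + 1 = r := by omega
          rw [← pow_succ', hexp]
  exact hmin (le_antisymm hfinal hother)
end

section
/- Let R be a commutative ring and let I, J be ideals of R with J I^r = I^{r+1} for some integer r ≥ 1. Assume that J^r : I^r = I^r and that each power I^i with 1 ≤ i ≤ r is Ratliff–Rush closed, i.e., the union over n ≥ 0 of the ideals I^{i+n} : I^n equals I^i. Then J^i : I^r = I^i for every integer i with 1 ≤ i ≤ r. -/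
/-- **Corollary 4.61, second assertion**: Let `R` be a commutative ring and `I, J` ideals with
`J I^r = I^(r+1)` for some `r ≥ 1`.  Assume `(J^r : I^r) = I^r` and that each power `I^i` with
`1 ≤ i ≤ r` is Ratliff–Rush closed, i.e. the (increasing) union `⋃_{n ≥ 0} (I^(i+n) : I^n)`
equals `I^i`.  Then `(J^i : I^r) = I^i` for all `1 ≤ i ≤ r` (the colon conditions of
Corollary 4.4(5) characterizing Gorensteinness of the associated graded ring). -/
theorem colon_pow_eq_pow_of_ratliffRush_closed
    {R : Type*} [CommRing R] (I J : Ideal R) (r : ℕ) (hr : 1 ≤ r)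
    (hred : J * I ^ r = I ^ (r + 1))
    (hcol : Submodule.colon (J ^ r) ((I ^ r : Ideal R) : Set R) = I ^ r)
    (hRR : ∀ i : ℕ, 1 ≤ i → i ≤ r →
      (⨆ n : ℕ, Submodule.colon (I ^ (i + n)) ((I ^ n : Ideal R) : Set R)) = I ^ i) :
    ∀ i : ℕ, 1 ≤ i → i ≤ r → Submodule.colon (J ^ i) ((I ^ r : Ideal R) : Set R) = I ^ i := by
  have key : ∀ k : ℕ, J ^ k * I ^ r = I ^ (r + k) := by
    intro k
    induction k with
    | zero => simp
    | succ k ih =>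
      calc J ^ (k+1) * I ^ r = J ^ k * (J * I ^ r) := by ring
        _ = J ^ k * I ^ (r+1) := by rw [hred]
        _ = (J ^ k * I ^ r) * I := by ring
        _ = I ^ (r + k) * I := by rw [ih]
        _ = I ^ (r + (k+1)) := by ring
  intro i h1 hi
  apply le_antisymm
  · intro x hx
    rw [Submodule.mem_colon] at hx
    have hx' : x ∈ Submodule.colon (I ^ r) ((I ^ (r - i) : Ideal R) : Set R) := by
      rw [← hcol, Submodule.mem_colon]
      intro q hq
      rw [Submodule.mem_colon]
      intro p hp
      have hqp : q * p ∈ J ^ (r - i) * I ^ r := by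
        rw [key (r - i)]
        have h2 : q * p ∈ I ^ (r - i) * I ^ r := Ideal.mul_mem_mul hq hp
        have he : (r - i) + r = r + (r - i) := by omega
        rwa [← pow_add, he] at h2
      have hmain : x * (q * p) ∈ J ^ r := by
        refine Submodule.mul_induction_on hqp ?_ ?_
        · intro a ha b hb
          have hxb : x * b ∈ J ^ i := by simpa [smul_eq_mul] using hx b hb
          have h3 : a * (x * b) ∈ J ^ (r - i) * J ^ i := Ideal.mul_mem_mul ha hxb
          rw [← pow_add, Nat.sub_add_cancel hi] at h3
          have : x * (a * b) = a * (x * b) := by ring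
          rwa [this]
        · intro a b ha hb
          have h4 : x * (a + b) = x * a + x * b := by ring
          rw [h4]
          exact Ideal.add_mem _ ha hb
      simpa [smul_eq_mul, mul_assoc] using hmain
    have hle : Submodule.colon (I ^ r) ((I ^ (r - i) : Ideal R) : Set R) ≤ I ^ i := by
      rw [← hRR i h1 hi]
      have hr' : i + (r - i) = r := Nat.add_sub_cancel' hi
      calc Submodule.colon (I ^ r) ((I ^ (r - i) : Ideal R) : Set R)
          = Submodule.colon (I ^ (i + (r - i))) ((I ^ (r - i) : Ideal R) : Set R) := by rw [hr']
        _ ≤ ⨆ n : ℕ, Submodule.colon (I ^ (i + n)) ((I ^ n : Ideal R) : Set R) := le_iSup (fun n => Submodule.colon (I ^ (i + n)) ((I ^ n : Ideal R) : Set R)) (r - i)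
    exact hle hx'
  · intro x hx
    rw [Submodule.mem_colon]
    intro p hp
    have h5 : x * p ∈ I ^ i * I ^ r := Ideal.mul_mem_mul hx hp
    rw [← pow_add, add_comm, ← key i] at h5
    have h6 : J ^ i * I ^ r ≤ J ^ i := Ideal.mul_le_left
    simpa [smul_eq_mul] using h6 h5
end

section
/- Let R be a commutative ring, let x ∈ R be a non-zerodivisor, let J = xR, and let I be an ideal with J ⊆ I and J I^r = I^{r+1} for some integer r ≥ 0. If J^i : I^r = I^i for every integer i with 1 ≤ i ≤ r, then J^i : I^r = I^i for every integer i ≥ 1. -/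
/-- **Corollary 4.4, (5) ⟹ (4)**: Let `R` be a commutative ring, `x` a non-zerodivisor,
`J = xR ⊆ I`, and `J I^r = I^(r+1)` for some `r ≥ 0`.  If `(J^i : I^r) = I^i` for all
`1 ≤ i ≤ r`, then `(J^i : I^r) = I^i` for all `i ≥ 1`. -/
theorem colon_pow_eq_pow_of_le_r
    {R : Type*} [CommRing R] (x : R) (hx : x ∈ nonZeroDivisors R)
    (J : Ideal R) (hJ : J = Ideal.span {x}) (I : Ideal R) (hJI : J ≤ I)
    (r : ℕ) (hred : J * I ^ r = I ^ (r + 1))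
    (hcol : ∀ i : ℕ, 1 ≤ i → i ≤ r → Submodule.colon (J ^ i) ((I ^ r : Ideal R) : Set R) = I ^ i) :
    ∀ i : ℕ, 1 ≤ i → Submodule.colon (J ^ i) ((I ^ r : Ideal R) : Set R) = I ^ i := by
  intro i hi
  -- case r = 0 : J = I and I^0 = ⊤
  rcases Nat.eq_zero_or_pos r with hr0 | hrpos
  · subst hr0
    have hJeqI : J = I := by simpa using hred
    subst hJeqI
    ext z
    simp only [pow_zero, Ideal.one_eq_top, Submodule.mem_colon]
    constructor
    · intro h
      simpa using h 1 trivial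
    · intro hz p _
      exact Ideal.mul_mem_right p _ hz
  rcases le_or_gt i r with hir | hir
  · exact hcol i hi hir
  -- now i > r ≥ 1
  have hxI : x ∈ I := hJI (hJ ▸ Ideal.mem_span_singleton_self x)
  have hxn : ∀ n : ℕ, x ^ n ∈ nonZeroDivisors R := fun n => pow_mem hx n
  have hJn : ∀ n : ℕ, J ^ n = Ideal.span {x ^ n} := fun n => by
    rw [hJ, Ideal.span_singleton_pow]
  have hk : r + (i - r) = i := Nat.add_sub_cancel' hir.le
  ext z
  constructor
  · intro hz
    -- z * x^r ∈ J^i, so x^i ∣ z * x^r, write z = c * x^(i-r)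
    have h1 : z * x ^ r ∈ J ^ i := by
      simpa [smul_eq_mul] using Submodule.mem_colon.1 hz (x ^ r) (Ideal.pow_mem_pow hxI r)
    rw [hJn, Ideal.mem_span_singleton] at h1
    obtain ⟨c, hc⟩ := h1
    -- x^i = x^(i-r) * x^r
    have hzc : z = x ^ (i - r) * c := by
      have h3 : x ^ r * z = x ^ r * (x ^ (i - r) * c) := by
        rw [mul_comm (x ^ r) z, hc]
        rw [show x ^ i = x ^ (r + (i - r)) from by rw [hk], pow_add]
        ring
      exact (mul_cancel_left_mem_nonZeroDivisors (hxn r)).1 h3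
    -- show c ∈ (J^r : I^r) = I^r
    have hcIr : c ∈ I ^ r := by
      rw [← hcol r hrpos le_rfl]
      refine Submodule.mem_colon.2 fun p hp => ?_
      have h2 : z * p ∈ J ^ i := by
        simpa [smul_eq_mul] using Submodule.mem_colon.1 hz p hp
      rw [hJn, Ideal.mem_span_singleton] at h2
      obtain ⟨d, hd⟩ := h2
      rw [hJn, Ideal.mem_span_singleton, smul_eq_mul]
      refine ⟨d, (mul_cancel_left_mem_nonZeroDivisors (hxn (i - r))).1 ?_⟩
      calc x ^ (i - r) * (c * p) = z * p := by rw [hzc]; ring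
        _ = x ^ (i - r) * (x ^ r * d) := by
            rw [hd, show x ^ i = x ^ (r + (i - r)) from by rw [hk], pow_add]; ring
    -- conclude z ∈ I^i
    have : z ∈ I ^ r * I ^ (i - r) :=
      hzc ▸ mul_comm (x ^ (i - r)) c ▸ Ideal.mul_mem_mul hcIr (Ideal.pow_mem_pow hxI (i - r))
    rwa [← pow_add, hk] at this
  · intro hz
    -- I^i * I^r = I^(i+r) = J^(i-r+?) ... show I^(i+r) ≤ J^i
    have key : ∀ k : ℕ, J ^ k * I ^ r = I ^ (r + k) := by
      intro k
      induction k with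
      | zero => simp
      | succ k ih =>
        calc J ^ (k + 1) * I ^ r = J * (J ^ k * I ^ r) := by ring
          _ = J * I ^ (r + k) := by rw [ih]
          _ = (J * I ^ r) * I ^ k := by rw [pow_add]; ring
          _ = I ^ (r + 1) * I ^ k := by rw [hred]
          _ = I ^ (r + (k + 1)) := by rw [← pow_add]; ring_nf
    have hle : I ^ (i + r) ≤ J ^ i := by
      have : I ^ (i + r) = J ^ i * I ^ r := by
        rw [key i, Nat.add_comm]
      rw [this]
      exact Ideal.mul_le_left.trans_eq rfl
    refine Submodule.mem_colon.2 fun p hp => ?_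
    have : z * p ∈ I ^ i * I ^ r := Ideal.mul_mem_mul hz hp
    rw [← pow_add] at this
    simpa [smul_eq_mul] using hle this
end

section
/- Let R be a commutative ring, let x ∈ R be a non-zerodivisor, let J = xR, and let I be an ideal with J ⊆ I. Let r ≥ 1 be an integer with I^{r+1} = JI^r and I^r ≠ JI^{r-1}. If there exists an integer u ≥ 0 such that J^i : I^r = I^{max(i-u,0)} for every integer i ≥ 0, then J^i : I^r = I^i for every integer i ≥ 0 (that is, u can be taken to be 0). -/
/-- **Corollary 4.4, (3) ⟹ (4)**: Let `R` be a commutative ring, `x` a non-zerodivisor,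
`J = xR ⊆ I`, and `r ≥ 1` with `I^(r+1) = J I^r` and `I^r ≠ J I^(r-1)`.  If there is `u ≥ 0`
with `(J^i : I^r) = I^(max(i-u,0))` for every `i ≥ 0` (truncated subtraction encodes negative
powers of `I` being `R`), then `(J^i : I^r) = I^i` for every `i ≥ 0`. -/
theorem colon_pow_eq_pow_of_exists_shift
    {R : Type*} [CommRing R] (x : R) (hx : x ∈ nonZeroDivisors R)
    (J : Ideal R) (hJ : J = Ideal.span {x}) (I : Ideal R) (hJI : J ≤ I)
    (r : ℕ) (hr : 1 ≤ r) (hred : I ^ (r + 1) = J * I ^ r) (hmin : I ^ r ≠ J * I ^ (r - 1))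
    (u : ℕ) (hu : ∀ i : ℕ, Submodule.colon (J ^ i) ((I ^ r : Ideal R) : Set R) = I ^ (i - u)) :
    ∀ i : ℕ, Submodule.colon (J ^ i) ((I ^ r : Ideal R) : Set R) = I ^ i := by
  -- powers above the reduction number
  have hk : ∀ k : ℕ, I ^ (r + k) = J ^ k * I ^ r := by
    intro k
    induction k with
    | zero => simp
    | succ n ih =>
      have h1 : I ^ (r + (n + 1)) = I ^ (r + n) * I := by ring
      have h2 : (J : Ideal R) ^ n * I ^ r * I = J ^ n * I ^ (r + 1) := by ring
      rw [h1, ih, h2, hred]; ring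
  rcases Nat.eq_zero_or_pos u with hu0 | hupos
  · subst hu0; intro i; simpa using hu i
  · exfalso
    apply hmin
    -- from `hu u`, `I^r ≤ J^u`; in particular colon at 1 gives `I^r ≤ J`
    have hcol : ∀ k : ℕ, k - u = 0 → I ^ r ≤ J ^ k := by
      intro k hkz a ha
      have h := hu k
      rw [hkz, pow_zero, Ideal.one_eq_top] at h
      have h1 : (1 : R) ∈ Submodule.colon (J ^ k) ((I ^ r : Ideal R) : Set R) := by rw [h]; trivial
      simpa using Submodule.mem_colon.mp h1 a ha
    have hIrJ : I ^ r ≤ J := by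
      simpa using hcol 1 (by omega)
    have hIrJu : I ^ r ≤ J ^ u := hcol u (by omega)
    have h2r : I ^ (r + r) ≤ J ^ (r + u) := by
      rw [hk r, pow_add]
      exact Ideal.mul_mono le_rfl hIrJu
    refine le_antisymm ?_ ?_
    · -- I^r ≤ J * I^(r-1)
      intro y hy
      obtain ⟨z, hz⟩ := Ideal.mem_span_singleton'.mp (hJ ▸ hIrJ hy)
      have hzcol : z ∈ Submodule.colon (J ^ (r + u - 1)) ((I ^ r : Ideal R) : Set R) := by
        rw [Submodule.mem_colon]
        intro p hp
        have hyp : y * p ∈ J ^ (r + u) := by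
          apply h2r
          rw [pow_add]
          exact Ideal.mul_mem_mul hy hp
        rw [hJ, Ideal.span_singleton_pow] at hyp
        obtain ⟨c, hc⟩ := Ideal.mem_span_singleton'.mp hyp
        have hc' : z * p * x = c * x ^ (r + u - 1) * x := by
          rw [show r + u = (r + u - 1) + 1 from by omega, pow_succ] at hc
          calc z * p * x = z * x * p := by ring
            _ = y * p := by rw [hz]
            _ = c * x ^ (r + u - 1) * x := by rw [← hc]; ring
        have hz2 : z * p = c * x ^ (r + u - 1) :=
          (mul_cancel_right_mem_nonZeroDivisors hx).mp hc'
        show z • p ∈ J ^ (r + u - 1)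
        rw [smul_eq_mul, hJ, Ideal.span_singleton_pow]
        exact Ideal.mem_span_singleton'.mpr ⟨c, hz2.symm⟩
      have hcolon := hu (r + u - 1)
      rw [show r + u - 1 - u = r - 1 from by omega] at hcolon
      rw [hcolon] at hzcol
      have : x * z ∈ J * I ^ (r - 1) :=
        Ideal.mul_mem_mul (hJ ▸ Ideal.mem_span_singleton_self x) hzcol
      rwa [show x * z = y from by rw [← hz]; ring] at this
    · -- J * I^(r-1) ≤ I^r
      calc J * I ^ (r - 1) ≤ I * I ^ (r - 1) := Ideal.mul_mono hJI le_rfl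
        _ = I ^ r := by rw [← pow_succ']; congr 1; omega
end

section
/- Let R be a commutative ring, let x ∈ R be a non-zerodivisor, let J = xR, and let I be an ideal with J I^r = I^{r+1} for some integer r ≥ 1. Then I^r ⊆ J if and only if I^{r-1} ⊆ J^r : I^r. -/
/-- **Remark 4.6(2)**: Let `R` be a commutative ring, `x` a non-zerodivisor, `J = xR`, and `I`
an ideal with `J I^r = I^(r+1)` for some `r ≥ 1`.  Then `I^r ⊆ J` iff
`I^(r-1) ⊆ (J^r : I^r)`. -/
theorem pow_le_span_iff_pow_pred_le_colon
    {R : Type*} [CommRing R] (x : R) (hx : x ∈ nonZeroDivisors R)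
    (J : Ideal R) (hJ : J = Ideal.span {x}) (I : Ideal R)
    (r : ℕ) (hr : 1 ≤ r) (hred : J * I ^ r = I ^ (r + 1)) :
    I ^ r ≤ J ↔ I ^ (r - 1) ≤ Submodule.colon (J ^ r) ((I ^ r : Ideal R) : Set R) := by
  obtain ⟨s, rfl⟩ : ∃ s, r = s + 1 := ⟨r - 1, (Nat.succ_pred_eq_of_pos hr).symm⟩
  simp only [Nat.add_sub_cancel]
  -- key: J^k * I^(s+1) = I^(s+1+k)
  have key : ∀ k, J ^ k * I ^ (s + 1) = I ^ (s + 1 + k) := by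
    intro k
    induction k with
    | zero => simp
    | succ k ih =>
      calc J ^ (k + 1) * I ^ (s + 1) = J * (J ^ k * I ^ (s + 1)) := by ring
        _ = J * I ^ (s + 1 + k) := by rw [ih]
        _ = (J * I ^ (s + 1)) * I ^ k := by rw [pow_add]; ring
        _ = I ^ (s + 1 + 1) * I ^ k := by rw [hred]
        _ = I ^ (s + 1 + (k + 1)) := by rw [← pow_add]; ring_nf
  have hxJ : x ∈ J := hJ ▸ Ideal.mem_span_singleton_self x
  constructor
  · intro h
    have hmul : I ^ s * I ^ (s + 1) ≤ J ^ (s + 1) := by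
      have : I ^ s * I ^ (s + 1) = J ^ s * I ^ (s + 1) := by
        rw [key s, ← pow_add]; ring_nf
      rw [this, pow_succ]
      exact Ideal.mul_mono le_rfl h
    intro a ha
    rw [Submodule.mem_colon]
    intro p hp
    rw [smul_eq_mul]
    exact hmul (Ideal.mul_mem_mul ha hp)
  · intro h
    have hmul : I ^ s * I ^ (s + 1) ≤ J ^ (s + 1) := by
      rw [Ideal.mul_le]
      intro a ha b hb
      have := Submodule.mem_colon.1 (h ha) b hb
      rwa [smul_eq_mul] at this
    have h2 : J ^ s * I ^ (s + 1) ≤ J ^ (s + 1) := by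
      rw [key s]
      calc I ^ (s + 1 + s) = I ^ s * I ^ (s + 1) := by rw [← pow_add]; ring_nf
        _ ≤ J ^ (s + 1) := hmul
    intro a ha
    have hxa : x ^ s * a ∈ J ^ (s + 1) :=
      h2 (Ideal.mul_mem_mul (Ideal.pow_mem_pow hxJ s) ha)
    rw [hJ, Ideal.span_singleton_pow, Ideal.mem_span_singleton'] at hxa
    obtain ⟨c, hc⟩ := hxa
    rw [hJ, Ideal.mem_span_singleton']
    refine ⟨c, ?_⟩
    have hxs : (x ^ s : R) ∈ nonZeroDivisors R := pow_mem hx s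
    rw [← mul_cancel_right_mem_nonZeroDivisors hxs, mul_comm a (x ^ s), ← hc, pow_succ]
    ring
end

section
/- Let R be a commutative ring, let I be an ideal, and let x, y ∈ R be non-zerodivisors with xR ⊆ I and yR ⊆ I. Suppose r ≥ 0 is least with x I^r = I^{r+1} and s ≥ 0 is least with y I^s = I^{s+1}. Then r = s, and moreover x^r R : I^r = y^r R : I^r (so both the reduction number and the ideal J^r : I^r are independent of the choice of principal reduction J of I). -/
section Aux

variable {R : Type*} [CommRing R]

/-- If `x I^r = I^(r+1)` then `x I^(r+k) = I^(r+k+1)` for all `k`. -/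
private lemma aux_step (I : Ideal R) (x : R) (r : ℕ)
    (hr : Ideal.span {x} * I ^ r = I ^ (r + 1)) (k : ℕ) :
    Ideal.span {x} * I ^ (r + k) = I ^ (r + k + 1) := by
  induction k with
  | zero => simpa using hr
  | succ k ih =>
    have : I ^ (r + (k + 1)) = I * I ^ (r + k) := by ring
    rw [this, ← mul_assoc, mul_comm (Ideal.span {x}) I, mul_assoc, ih]
    ring

/-- If `x I^r = I^(r+1)` then `x^k I^r = I^(r+k)` for all `k`. -/
private lemma aux_pow (I : Ideal R) (x : R) (r : ℕ)
    (hr : Ideal.span {x} * I ^ r = I ^ (r + 1)) (k : ℕ) :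
    Ideal.span {x} ^ k * I ^ r = I ^ (r + k) := by
  induction k with
  | zero => simp
  | succ k ih =>
    have h2 := aux_step I x r hr k
    calc Ideal.span {x} ^ (k + 1) * I ^ r
        = Ideal.span {x} * (Ideal.span {x} ^ k * I ^ r) := by ring
      _ = Ideal.span {x} * I ^ (r + k) := by rw [ih]
      _ = I ^ (r + k + 1) := h2
      _ = I ^ (r + (k + 1)) := by ring_nf

/-- If `r ≤ s`, `x I^r = I^(r+1)`, `y I^s = I^(s+1)`, `x` a nonzerodivisor, `y ∈ I`,
then `y I^r = I^(r+1)`. -/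
private lemma aux_reduce (I : Ideal R) (x y : R) (hx : x ∈ nonZeroDivisors R)
    (hyI : Ideal.span {y} ≤ I) (r s : ℕ) (hrs : r ≤ s)
    (hr : Ideal.span {x} * I ^ r = I ^ (r + 1))
    (hs : Ideal.span {y} * I ^ s = I ^ (s + 1)) :
    Ideal.span {y} * I ^ r = I ^ (r + 1) := by
  obtain ⟨d, rfl⟩ := Nat.exists_eq_add_of_le hrs
  apply le_antisymm
  · calc Ideal.span {y} * I ^ r ≤ I * I ^ r := mul_le_mul_left hyI _
      _ = I ^ (r + 1) := by ring
  · intro a ha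
    -- x^d * a ∈ x^d * I^(r+1) = I^(r+d+1) = y * I^(r+d) = y * x^d * I^r = x^d * (y I^r)
    have hxd : x ^ d ∈ Ideal.span {x} ^ d := by
      rw [Ideal.span_singleton_pow]; exact Ideal.mem_span_singleton_self _
    have h1 : x ^ d * a ∈ Ideal.span {x} ^ d * I ^ (r + 1) := Ideal.mul_mem_mul hxd ha
    have hr1 : Ideal.span {x} * I ^ (r + 1) = I ^ (r + 1 + 1) := aux_step I x r hr 1
    have h2 : Ideal.span {x} ^ d * I ^ (r + 1) = I ^ (r + d + 1) := by
      rw [aux_pow I x (r + 1) hr1 d]; ring_nf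
    have h3 : Ideal.span {x} ^ d * I ^ r = I ^ (r + d) := aux_pow I x r hr d
    have h4 : I ^ (r + d + 1) = Ideal.span {x ^ d} * (Ideal.span {y} * I ^ r) := by
      rw [← hs, ← h3, ← Ideal.span_singleton_pow]; ring
    rw [h2, h4] at h1
    obtain ⟨c, hc, hcc⟩ := Ideal.mem_span_singleton_mul.mp h1
    have := (mul_cancel_left_mem_nonZeroDivisors (pow_mem hx d)).mp hcc
    rwa [← this]

/-- One inclusion of the colon ideal equality. -/
private lemma aux_colon (I : Ideal R) (x y : R)
    (hx : x ∈ nonZeroDivisors R) (r : ℕ)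
    (hr : Ideal.span {x} * I ^ r = I ^ (r + 1))
    (hs : Ideal.span {y} * I ^ r = I ^ (r + 1)) :
    Submodule.colon (Ideal.span {x} ^ r) ((I ^ r : Ideal R) : Set R) ≤
      Submodule.colon (Ideal.span {y} ^ r) ((I ^ r : Ideal R) : Set R) := by
  intro z hz
  rw [Submodule.mem_colon] at hz ⊢
  intro a ha
  -- x^r * a ∈ x^r I^r = I^(2r) = y^r I^r
  have hxr : x ^ r ∈ Ideal.span {x} ^ r := by
    rw [Ideal.span_singleton_pow]; exact Ideal.mem_span_singleton_self _
  have h1 : x ^ r * a ∈ Ideal.span {x} ^ r * I ^ r := Ideal.mul_mem_mul hxr ha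
  have h2 : Ideal.span {x} ^ r * I ^ r = Ideal.span {y ^ r} * I ^ r := by
    rw [aux_pow I x r hr r, ← Ideal.span_singleton_pow, aux_pow I y r hs r]
  rw [h2] at h1
  obtain ⟨b, hb, hbb⟩ := Ideal.mem_span_singleton_mul.mp h1
  -- z * b ∈ span {x^r}
  have hzb : z * b ∈ Ideal.span {x ^ r} := by
    rw [← Ideal.span_singleton_pow]
    simpa [smul_eq_mul] using hz b hb
  obtain ⟨c, hc⟩ := Ideal.mem_span_singleton'.mp hzb
  -- x^r * (z * a) = x^r * (y^r * c)
  have key : x ^ r * (z * a) = x ^ r * (y ^ r * c) := by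
    calc x ^ r * (z * a) = z * (x ^ r * a) := by ring
      _ = z * (y ^ r * b) := by rw [hbb]
      _ = y ^ r * (z * b) := by ring
      _ = y ^ r * (c * x ^ r) := by rw [hc]
      _ = x ^ r * (y ^ r * c) := by ring
  have := (mul_cancel_left_mem_nonZeroDivisors (pow_mem hx r)).mp key
  rw [smul_eq_mul, this, Ideal.span_singleton_pow]
  exact Ideal.mem_span_singleton'.mpr ⟨c, by ring⟩

end Aux

/-- **Remark 4.6(1)**: Let `R` be a commutative ring, `I` an ideal, and `x, y`
non-zerodivisors with `xR ⊆ I` and `yR ⊆ I`.  If `r` is least with `x I^r = I^(r+1)` and `s`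
is least with `y I^s = I^(s+1)`, then `r = s` and `(x^r R : I^r) = (y^s R : I^s)`: both the
reduction number and the ideal `J^r : I^r` are independent of the principal reduction `J`. -/
theorem reduction_number_and_colon_independent
    {R : Type*} [CommRing R] (I : Ideal R) (x y : R)
    (hx : x ∈ nonZeroDivisors R) (hy : y ∈ nonZeroDivisors R)
    (hxI : Ideal.span {x} ≤ I) (hyI : Ideal.span {y} ≤ I)
    (r s : ℕ)
    (hr : Ideal.span {x} * I ^ r = I ^ (r + 1))
    (hrmin : ∀ t : ℕ, t < r → Ideal.span {x} * I ^ t ≠ I ^ (t + 1))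
    (hs : Ideal.span {y} * I ^ s = I ^ (s + 1))
    (hsmin : ∀ t : ℕ, t < s → Ideal.span {y} * I ^ t ≠ I ^ (t + 1)) :
    r = s ∧
      Submodule.colon (Ideal.span {x} ^ r) ((I ^ r : Ideal R) : Set R) =
        Submodule.colon (Ideal.span {y} ^ s) ((I ^ s : Ideal R) : Set R) := by
  have hrs : r = s := by
    rcases lt_trichotomy r s with h | h | h
    · exact absurd (aux_reduce I x y hx hyI r s h.le hr hs) (hsmin r h)
    · exact h
    · exact absurd (aux_reduce I y x hy hxI s r h.le hs hr) (hrmin s h)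
  subst hrs
  refine ⟨rfl, le_antisymm ?_ ?_⟩
  · exact aux_colon I x y hx r hr hs
  · exact aux_colon I y x hy r hs hr
end

section
/- Let R be a commutative ring, let x ∈ R be a non-zerodivisor, let J = xR, and let I be an ideal with J ⊆ I. Let r ≥ 1 be an integer with I^{r+1} = JI^r and I^r ≠ JI^{r-1}. If J^r : I^r = I^r, then I^r is not contained in J; consequently the index of nilpotency s_J(I) = min{ i : I^{i+1} ⊆ J } equals r. -/
/-- **Remark 4.6(3)**: Let `R` be a commutative ring, `x` a non-zerodivisor, `J = xR ⊆ I`, and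
`r ≥ 1` with `I^(r+1) = J I^r` and `I^r ≠ J I^(r-1)`.  If `(J^r : I^r) = I^r`, then
`I^r ⊄ J`; consequently the index of nilpotency `s_J(I) = min{ i : I^(i+1) ⊆ J }`
equals `r`. -/
theorem not_pow_le_and_index_of_nilpotency_eq
    {R : Type*} [CommRing R] (x : R) (hx : x ∈ nonZeroDivisors R)
    (J : Ideal R) (hJ : J = Ideal.span {x}) (I : Ideal R) (hJI : J ≤ I)
    (r : ℕ) (hr : 1 ≤ r) (hred : I ^ (r + 1) = J * I ^ r) (hmin : I ^ r ≠ J * I ^ (r - 1))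
    (hcol : Submodule.colon (J ^ r) ((I ^ r : Ideal R) : Set R) = I ^ r) :
    ¬ I ^ r ≤ J ∧ sInf {i : ℕ | I ^ (i + 1) ≤ J} = r := by
  have hxJ : x ∈ J := by rw [hJ]; exact Ideal.mem_span_singleton_self x
  have hpow : ∀ k : ℕ, I ^ (r + k) = J ^ k * I ^ r := by
    intro k
    induction k with
    | zero => simp
    | succ k ih =>
      have h1 : I ^ (r + (k + 1)) = I ^ (r + k) * I := by rw [← pow_succ, Nat.add_assoc]
      rw [h1, ih, mul_assoc, ← pow_succ, hred, ← mul_assoc, ← pow_succ]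
  have hrsub : r - 1 + 1 = r := Nat.sub_add_cancel hr
  have h1 : ¬ I ^ r ≤ J := by
    intro h
    set K := (I ^ r).colon J with hK
    have hIK : I ^ r = J * K := by
      apply le_antisymm
      · intro y hy
        have hyJ : y ∈ J := h hy
        rw [hJ, Ideal.mem_span_singleton] at hyJ
        obtain ⟨a, rfl⟩ := hyJ
        have haK : a ∈ K := by
          rw [hK, Submodule.mem_colon]
          intro p hp
          rw [hJ, SetLike.mem_coe, Ideal.mem_span_singleton] at hp
          obtain ⟨c, rfl⟩ := hp
          have he : a • (x * c) = c * (x * a) := by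
            simp [smul_eq_mul]; ring
          rw [he]
          exact Ideal.mul_mem_left _ _ hy
        exact Ideal.mul_mem_mul hxJ haK
      · rw [mul_comm, Ideal.mul_le]
        intro a ha b hb
        simpa [smul_eq_mul] using Submodule.mem_colon.mp ha b hb
    have hKle : K ≤ (J ^ r).colon ((I ^ r : Ideal R) : Set R) := by
      intro a ha
      rw [Submodule.mem_colon]
      intro z hz
      have hxa : x * a ∈ I ^ r := by
        have := Submodule.mem_colon.mp ha x hxJ
        simpa [smul_eq_mul, mul_comm] using this
      have hmem : (x * a) * z ∈ I ^ r * I ^ r := Ideal.mul_mem_mul hxa hz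
      rw [← pow_add, hpow r] at hmem
      have hJr : J ^ r * I ^ r = Ideal.span {x} * (J ^ (r - 1) * I ^ r) := by
        rw [← hJ, ← mul_assoc, ← pow_succ', hrsub]
      rw [hJr] at hmem
      have hxaz : x * (a * z) ∈ Ideal.span {x} * (J ^ (r - 1) * I ^ r) := by
        have : x * (a * z) = x * a * z := by ring
        rwa [this]
      obtain ⟨c, hc, hcx⟩ := Ideal.mem_span_singleton_mul.mp hxaz
      have hcaz : c = a * z := by
        rwa [mul_cancel_left_mem_nonZeroDivisors hx] at hcx
      have haz : a * z ∈ J ^ (r - 1) * I ^ r := hcaz ▸ hc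
      have hle : J ^ (r - 1) * I ^ r ≤ J ^ r := by
        calc J ^ (r - 1) * I ^ r ≤ J ^ (r - 1) * J := mul_le_mul_right h _
          _ = J ^ r := by rw [← pow_succ, hrsub]
      simpa [smul_eq_mul] using hle haz
    rw [hcol] at hKle
    apply hmin
    apply le_antisymm
    · calc I ^ r = J * K := hIK
        _ ≤ J * I ^ r := mul_le_mul_right hKle _
        _ ≤ J * I ^ (r - 1) := mul_le_mul_right (Ideal.pow_le_pow_right (Nat.sub_le r 1)) _
    · calc J * I ^ (r - 1) ≤ I * I ^ (r - 1) := mul_le_mul_left hJI _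
        _ = I ^ r := by rw [← pow_succ', hrsub]
  refine ⟨h1, ?_⟩
  have hrmem : r ∈ {i : ℕ | I ^ (i + 1) ≤ J} := by
    simp only [Set.mem_setOf_eq, hred]
    exact Ideal.mul_le_inf.trans inf_le_left
  apply le_antisymm (Nat.sInf_le hrmem)
  apply le_csInf ⟨r, hrmem⟩
  intro i hi
  by_contra hlt
  push_neg at hlt
  exact h1 ((Ideal.pow_le_pow_right (by omega)).trans hi)
end

section
/- Let R be a commutative ring and let J ⊆ I be ideals of R. In the Laurent polynomial ring R[T, T^{-1}], let A be the R-subalgebra generated by T^{-1} together with all elements aT with a ∈ J, and let B be the R-subalgebra generated by T^{-1} together with all elements aT with a ∈ I (so A and B are the extended Rees algebras of J and I). Then for an element f of R[T, T^{-1}], one has f·b ∈ A for every b ∈ B if and only if for every integer i and every integer j ≥ 0 the coefficient of T^i in f lies in the colon ideal J^{max(i+j,0)} : I^j. -/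
open LaurentPolynomial

section Aux

variable {R : Type*} [CommRing R]

/-- Auxiliary: `C a * T n ∈` the extended Rees algebra when `a ∈ I ^ n`. -/
private lemma C_mul_T_mem_adjoin (I : Ideal R) :
    ∀ (n : ℕ) (a : R), a ∈ I ^ n →
      C a * T (n : ℤ) ∈ Algebra.adjoin R
        ({T (-1)} ∪ (fun a : R => C a * T 1) '' (I : Set R) : Set R[T;T⁻¹]) := by
  intro n
  induction n with
  | zero =>
    intro a _
    rw [Nat.cast_zero, T_zero, mul_one, C_eq_algebraMap]
    exact Subalgebra.algebraMap_mem _ a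
  | succ n ih =>
    intro a ha
    rw [pow_succ] at ha
    refine Submodule.mul_induction_on ha (fun b hb c hc => ?_) (fun x y hx hy => ?_)
    · have key : (C (b * c) * T ((n + 1 : ℕ) : ℤ) : R[T;T⁻¹])
          = (C b * T (n : ℤ)) * (C c * T 1) := by
        push_cast
        rw [map_mul, T_add]
        ring
      rw [key]
      exact mul_mem (ih b hb) (Algebra.subset_adjoin (Or.inr ⟨c, hc, rfl⟩))
    · rw [map_add, add_mul]
      exact add_mem hx hy

private lemma single_mem_adjoin (I : Ideal R) (n : ℤ) (a : R) (ha : a ∈ I ^ n.toNat) :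
    (AddMonoidAlgebra.single n a : R[T;T⁻¹]) ∈ Algebra.adjoin R
      ({T (-1)} ∪ (fun a : R => C a * T 1) '' (I : Set R) : Set R[T;T⁻¹]) := by
  rcases le_or_gt 0 n with h | h
  · lift n to ℕ using h
    rw [single_eq_C_mul_T]
    exact C_mul_T_mem_adjoin I n a (by simpa using ha)
  · have hexp : (((-n).toNat : ℤ)) * -1 = n := by omega
    have key : (AddMonoidAlgebra.single n a : R[T;T⁻¹]) = C a * (T (-1) : R[T;T⁻¹]) ^ (-n).toNat := by
      rw [T_pow, hexp, single_eq_C_mul_T]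
    rw [key]
    have hT : (T (-1) : R[T;T⁻¹]) ∈ Algebra.adjoin R
        ({T (-1)} ∪ (fun a : R => C a * T 1) '' (I : Set R) : Set R[T;T⁻¹]) :=
      Algebra.subset_adjoin (Set.mem_union_left _ rfl)
    have hC : (C a : R[T;T⁻¹]) ∈ Algebra.adjoin R
        ({T (-1)} ∪ (fun a : R => C a * T 1) '' (I : Set R) : Set R[T;T⁻¹]) := by
      rw [C_eq_algebraMap]
      exact Subalgebra.algebraMap_mem _ a
    exact mul_mem hC (pow_mem hT _)

/-- The extended Rees algebra as a subalgebra defined by coefficient conditions. -/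
private def reesAlg (I : Ideal R) : Subalgebra R R[T;T⁻¹] where
  carrier := {g | ∀ i : ℤ, g.coeff i ∈ I ^ i.toNat}
  add_mem' := fun {x y} hx hy i => by
    rw [AddMonoidAlgebra.coeff_add, Finsupp.add_apply]
    exact add_mem (hx i) (hy i)
  mul_mem' := fun {x y} hx hy i => by
    classical
    rw [AddMonoidAlgebra.coeff_mul]
    refine Submodule.sum_mem _ fun a _ => Submodule.sum_mem _ fun b _ => ?_
    dsimp only
    split_ifs with hab
    · refine SetLike.le_def.mp (Ideal.pow_le_pow_right (by omega : i.toNat ≤ a.toNat + b.toNat))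
        ?_
      rw [pow_add]
      exact Ideal.mul_mem_mul (hx a) (hy b)
    · exact zero_mem _
  algebraMap_mem' := fun r i => by
    rw [← C_eq_algebraMap, C_apply]
    split_ifs with h
    · simp [h]
    · exact zero_mem _

private lemma mem_adjoin_iff (I : Ideal R) (g : R[T;T⁻¹]) :
    g ∈ Algebra.adjoin R
      ({T (-1)} ∪ (fun a : R => C a * T 1) '' (I : Set R) : Set R[T;T⁻¹]) ↔
    ∀ i : ℤ, g.coeff i ∈ I ^ i.toNat := by
  constructor
  · intro hg
    have key : Algebra.adjoin R
        ({T (-1)} ∪ (fun a : R => C a * T 1) '' (I : Set R) : Set R[T;T⁻¹]) ≤ reesAlg I := by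
      refine Algebra.adjoin_le fun x hx => ?_
      rcases hx with hx | ⟨a, ha, rfl⟩
      · rw [Set.mem_singleton_iff] at hx
        subst hx
        intro i
        show (T (-1) : R[T;T⁻¹]).coeff i ∈ _
        rw [T_apply]
        split_ifs with h
        · subst h; simp
        · exact zero_mem _
      · intro i
        show ((C a * T 1 : R[T;T⁻¹])).coeff i ∈ _
        rw [← single_eq_C_mul_T, AddMonoidAlgebra.coeff_single, Finsupp.single_apply]
        split_ifs with h
        · subst h; simpa using ha
        · exact zero_mem _
    exact key hg
  · intro h
    have hg : g = g.coeff.sum fun n a => AddMonoidAlgebra.single n a :=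
      (AddMonoidAlgebra.sum_coeff_single g).symm
    rw [hg, Finsupp.sum]
    exact Subalgebra.sum_mem _ fun n hn => single_mem_adjoin I n (g.coeff n) (h n)

end Aux

/-- **The conductor computation in the proof of Theorem 4.1**: Let `R` be a commutative ring
and `J ⊆ I` ideals.  In the Laurent polynomial ring `R[T,T⁻¹]`, let `A` (resp. `B`) be the
`R`-subalgebra generated by `T⁻¹` together with all `aT` with `a ∈ J` (resp. `a ∈ I`) — the
extended Rees algebras of `J` and `I`.  Then `f · b ∈ A` for every `b ∈ B` iff for every
`i : ℤ` and every `j ≥ 0` the coefficient of `T^i` in `f` lies in `J^(max(i+j,0)) : I^j`. -/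
theorem mem_conductor_iff_coeff_mem_colon
    {R : Type*} [CommRing R] (J I : Ideal R) (hJI : J ≤ I) (f : R[T;T⁻¹]) :
    (∀ b ∈ Algebra.adjoin R
        ({T (-1)} ∪ (fun a : R => C a * T 1) '' (I : Set R) : Set R[T;T⁻¹]),
      f * b ∈ Algebra.adjoin R
        ({T (-1)} ∪ (fun a : R => C a * T 1) '' (J : Set R) : Set R[T;T⁻¹])) ↔
    (∀ (i : ℤ) (j : ℕ),
      f.coeff i ∈ Submodule.colon (J ^ (i + (j : ℤ)).toNat) ((I ^ j : Ideal R) : Set R)) := by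
  constructor
  · intro h i j
    rw [Submodule.mem_colon]
    intro a ha
    have hb : (AddMonoidAlgebra.single (j : ℤ) a : R[T;T⁻¹]) ∈ Algebra.adjoin R
        ({T (-1)} ∪ (fun a : R => C a * T 1) '' (I : Set R) : Set R[T;T⁻¹]) :=
      single_mem_adjoin I (j : ℤ) a (by simpa using ha)
    have hf := (mem_adjoin_iff J _).mp (h _ hb) (i + (j : ℤ))
    rw [AddMonoidAlgebra.coeff_mul_single_apply, add_neg_cancel_right] at hf
    simpa [smul_eq_mul] using hf
  · intro h b hb
    rw [mem_adjoin_iff I] at hb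
    rw [mem_adjoin_iff J]
    intro m
    classical
    rw [AddMonoidAlgebra.coeff_mul]
    refine Submodule.sum_mem _ fun i _ => Submodule.sum_mem _ fun k _ => ?_
    dsimp only
    split_ifs with hik
    · have h1 : f.coeff i • b.coeff k ∈ J ^ (i + (k.toNat : ℤ)).toNat :=
        Submodule.mem_colon.mp (h i k.toNat) (b.coeff k) (hb k)
      refine SetLike.le_def.mp
        (Ideal.pow_le_pow_right (by omega : m.toNat ≤ (i + (k.toNat : ℤ)).toNat)) ?_
      simpa [smul_eq_mul] using h1
    · exact zero_mem _
end
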